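/- arXiv:2412.12787 — 3 statements merged into one kernel-verified Lean document; each statement's English description precedes it below -/
import Mathlib

section
/- Let b ≥ 3 and r ≥ 1 be integers. Every tree with exactly b leaves, diameter 2r+1, and exactly br+2 vertices is isomorphic to a crab graph CG(b−ℓ, ℓ, r) for some integer 1 ≤ ℓ ≤ b−1. -/
open scoped BigOperators
open Classical

/-- The Dirichlet energy of a function on a finite graph: `∑_{edges xy} (f x - f y)^2`. -/
noncomputable def dirichletEnergy {V : Type*} [Fintype V] (G : SimpleGraph V) (f : V → ℝ) : ℝ :=
  (∑ x : V, ∑ y : V, if G.Adj x y then (f x - f y) ^ 2 else 0) / 2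

/-- The `k`-th Steklov (Dirichlet-to-Neumann) eigenvalue (1-indexed, in increasing order
with multiplicity) of a finite graph `G` with boundary `B`, via the variational
(Courant–Fischer) characterization. -/
noncomputable def steklovEig {V : Type*} [Fintype V] (G : SimpleGraph V) (B : Finset V)
    (k : ℕ) : ℝ :=
  sInf { t : ℝ | ∃ F : Submodule ℝ (V → ℝ),
    Module.finrank ℝ (F.map (LinearMap.funLeft ℝ ℝ (fun x : {v // v ∈ B} => (x : V)))) = k ∧
    ∀ f ∈ F, dirichletEnergy G f ≤ t * ∑ x ∈ B, (f x) ^ 2 }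

/-- The set of leaves (vertices of degree 1) of a finite graph, as a `Finset`. -/
noncomputable def leavesFinset {V : Type*} [Fintype V] (G : SimpleGraph V) : Finset V :=
  Finset.univ.filter fun v => G.degree v = 1

/-- `σ_{k,max}(b,n)`: the maximum of the `k`-th Steklov eigenvalue over all trees with
`b` leaves (as boundary) and `n` vertices. -/
noncomputable def sigmaMax (k b n : ℕ) : ℝ :=
  sSup { s : ℝ | ∃ G : SimpleGraph (Fin n), G.IsTree ∧ (leavesFinset G).card = b ∧
    s = steklovEig G (leavesFinset G) k }

/-- `σ̃_{2,max}(D,n)`: the maximum of the first nontrivial Steklov eigenvalue over all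
trees with diameter `D` and `n` vertices. -/
noncomputable def sigmaTildeMax (D n : ℕ) : ℝ :=
  sSup { s : ℝ | ∃ G : SimpleGraph (Fin n), G.IsTree ∧ G.diam = D ∧
    s = steklovEig G (leavesFinset G) 2 }

/-- The crab graph `CG(b₁,b₂,r)`: an edge `u₀v₀` (`u₀ = Sum.inr (Sum.inr false)`,
`v₀ = Sum.inr (Sum.inr true)`) with `b₁` paths of length `r` attached at `u₀` and
`b₂` paths of length `r` attached at `v₀`. -/
def crabGraph (b₁ b₂ r : ℕ) :
    SimpleGraph ((Fin b₁ × Fin r) ⊕ (Fin b₂ × Fin r) ⊕ Bool) :=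
  SimpleGraph.fromRel fun x y =>
    match x, y with
    | Sum.inr (Sum.inr false), Sum.inr (Sum.inr true) => True
    | Sum.inr (Sum.inr false), Sum.inl (_, i) => (i : ℕ) = 0
    | Sum.inr (Sum.inr true), Sum.inr (Sum.inl (_, i)) => (i : ℕ) = 0
    | Sum.inl (ℓ, i), Sum.inl (m, j) => ℓ = m ∧ (j : ℕ) = (i : ℕ) + 1
    | Sum.inr (Sum.inl (ℓ, i)), Sum.inr (Sum.inl (m, j)) => ℓ = m ∧ (j : ℕ) = (i : ℕ) + 1
    | _, _ => False
section aux
variable {V : Type*} {T : SimpleGraph V}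

lemma aux_dist_getVert_le (hc : T.Connected) {x y : V} (p : T.Walk x y) (i : ℕ) :
    T.dist x (p.getVert i) ≤ i := by
  induction p generalizing i with
  | nil => simp [SimpleGraph.Walk.getVert, SimpleGraph.dist_self]
  | @cons a b c h q ih =>
    cases i with
    | zero => simp [SimpleGraph.Walk.getVert]
    | succ i =>
      rw [SimpleGraph.Walk.getVert_cons_succ]
      have h1 : T.dist a b = 1 := (T.dist_eq_one_iff_adj).2 h
      have := hc.dist_triangle (u := a) (v := b) (w := q.getVert i)
      have := ih i
      omega

lemma aux_dist_getVert_right_le {x y : V} (p : T.Walk x y) (i : ℕ) :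
    T.dist (p.getVert i) y ≤ p.length - i := by
  induction p generalizing i with
  | nil => simp [SimpleGraph.Walk.getVert, SimpleGraph.dist_self]
  | @cons a b c h q ih =>
    cases i with
    | zero =>
      simpa using T.dist_le (SimpleGraph.Walk.cons h q)
    | succ i =>
      rw [SimpleGraph.Walk.getVert_cons_succ]
      simpa using ih i

/-- positions on a geodesic walk realize distances -/
lemma aux_geo_getVert (hc : T.Connected) {x y : V} (p : T.Walk x y)
    (hp : p.length = T.dist x y) {i : ℕ} (hi : i ≤ p.length) :
    T.dist x (p.getVert i) = i ∧ T.dist (p.getVert i) y = p.length - i := by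
  have h1 := aux_dist_getVert_le hc p i
  have h2 := aux_dist_getVert_right_le p i
  have h3 := hc.dist_triangle (u := x) (v := p.getVert i) (w := y)
  omega

lemma aux_dist_getVert_getVert (hc : T.Connected) {x y : V} (p : T.Walk x y)
    {i j : ℕ} (hij : i ≤ j) : T.dist (p.getVert i) (p.getVert j) ≤ j - i := by
  induction p generalizing i j with
  | nil => simp [SimpleGraph.Walk.getVert, SimpleGraph.dist_self]
  | @cons a b c h q ih =>
    cases i with
    | zero =>
      cases j with
      | zero => simp [SimpleGraph.Walk.getVert]
      | succ j =>
        rw [SimpleGraph.Walk.getVert_cons_succ]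
        have h1 : T.dist a b = 1 := (T.dist_eq_one_iff_adj).2 h
        have := hc.dist_triangle (u := a) (v := b) (w := q.getVert j)
        have := aux_dist_getVert_le hc q j
        simp only [SimpleGraph.Walk.getVert_zero]
        omega
    | succ i =>
      cases j with
      | zero => omega
      | succ j =>
        rw [SimpleGraph.Walk.getVert_cons_succ, SimpleGraph.Walk.getVert_cons_succ]
        have := ih (i := i) (j := j) (by omega)
        omega

end aux

section aux2
variable {V : Type*} {T : SimpleGraph V}

lemma aux_walk_eq (ha : T.IsAcyclic) {x y : V} (p q : T.Walk x y)
    (hp : p.IsPath) (hq : q.IsPath) : p = q := by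
  have := ha.path_unique ⟨p, hp⟩ ⟨q, hq⟩
  exact congrArg Subtype.val this

/-- a vertex metrically between `x` and `z` sits at position `dist x w` on any geodesic. -/
lemma aux_on_geo (ht : T.IsTree) {x z w : V} (h : T.dist x w + T.dist w z = T.dist x z)
    (p : T.Walk x z) (hp : p.length = T.dist x z) : p.getVert (T.dist x w) = w := by
  have hc := ht.isConnected
  obtain ⟨q1, h1⟩ := hc.exists_walk_length_eq_dist x w
  obtain ⟨q2, h2⟩ := hc.exists_walk_length_eq_dist w z
  have hlen : (q1.append q2).length = T.dist x z := by
    rw [SimpleGraph.Walk.length_append, h1, h2, h]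
  have hq : (q1.append q2).IsPath := SimpleGraph.Walk.isPath_of_length_eq_dist _ hlen
  have hpp : p.IsPath := SimpleGraph.Walk.isPath_of_length_eq_dist _ hp
  have heq : p = q1.append q2 := aux_walk_eq ht.IsAcyclic _ _ hpp hq
  rw [heq, SimpleGraph.Walk.getVert_append]
  simp [h1]

lemma aux_dist_ne_of_adj [DecidableEq V] (ht : T.IsTree) {a b w : V} (hab : T.Adj a b) :
    T.dist w a ≠ T.dist w b := by
  have hc := ht.isConnected
  intro hEq
  obtain ⟨p, h1⟩ := hc.exists_walk_length_eq_dist w a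
  have hbp : b ∉ p.support := by
    intro hb
    have hsplit := SimpleGraph.Walk.take_spec p hb
    have hlen : (p.takeUntil b hb).length + (p.dropUntil b hb).length = p.length := by
      conv_rhs => rw [← hsplit]
      rw [SimpleGraph.Walk.length_append]
    have h3 : T.dist w b ≤ (p.takeUntil b hb).length := T.dist_le _
    have h4 : T.dist b a ≤ (p.dropUntil b hb).length := T.dist_le _
    have h5 : T.dist b a = 0 := by omega
    rw [SimpleGraph.dist_comm] at h5
    exact hab.ne ((hc.dist_eq_zero_iff).1 h5)
  have hq : (p.concat hab).IsPath := by
    rw [SimpleGraph.Walk.isPath_def, SimpleGraph.Walk.support_concat,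
      List.nodup_append]
    refine ⟨(SimpleGraph.Walk.isPath_of_length_eq_dist p h1).support_nodup, by simp, ?_⟩
    intro x hx y hy hxy
    rw [List.mem_singleton] at hy
    exact hbp (hy ▸ hxy ▸ hx)
  obtain ⟨q, h2⟩ := hc.exists_walk_length_eq_dist w b
  have hqq : q.IsPath := SimpleGraph.Walk.isPath_of_length_eq_dist q h2
  have heq2 := aux_walk_eq ht.IsAcyclic _ _ hq hqq
  have hL := congrArg SimpleGraph.Walk.length heq2
  rw [SimpleGraph.Walk.length_concat, h1, h2] at hL
  omega

lemma aux_dist_adj_cases [DecidableEq V] (ht : T.IsTree) {a b : V} (hab : T.Adj a b) (w : V) :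
    T.dist w b = T.dist w a + 1 ∨ T.dist w a = T.dist w b + 1 := by
  have hc := ht.isConnected
  have hab1 : T.dist a b = 1 := SimpleGraph.dist_eq_one_iff_adj.2 hab
  have hba1 : T.dist b a = 1 := by rwa [SimpleGraph.dist_comm] at hab1
  have h1 : T.dist w b ≤ T.dist w a + 1 := by
    have := hc.dist_triangle (u := w) (v := a) (w := b); omega
  have h2 : T.dist w a ≤ T.dist w b + 1 := by
    have := hc.dist_triangle (u := w) (v := b) (w := a); omega
  have h3 := aux_dist_ne_of_adj ht hab (w := w)
  omega

end aux2

section aux3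
variable {V : Type*} [DecidableEq V] {T : SimpleGraph V}

lemma aux_cross (ht : T.IsTree) {c c' a b : V} (hcc' : T.Adj c c')
    (ha : T.dist a c' = T.dist a c + 1) (hb : T.dist b c = T.dist b c' + 1)
    (hab : T.Adj a b) : a = c ∧ b = c' := by
  have hc := ht.isConnected
  have hab1 : T.dist a b = 1 := SimpleGraph.dist_eq_one_iff_adj.2 hab
  have hba1 : T.dist b a = 1 := by rwa [SimpleGraph.dist_comm] at hab1
  set da := T.dist a c with hda
  have e1 : T.dist b c' = da := by
    have t1 := hc.dist_triangle (u := a) (v := b) (w := c')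
    have t2 := hc.dist_triangle (u := b) (v := a) (w := c)
    omega
  have e2 : T.dist b c = da + 1 := by omega
  rcases Nat.eq_zero_or_pos da with h0 | hpos
  · constructor
    · exact (hc.dist_eq_zero_iff).1 (by omega)
    · exact (hc.dist_eq_zero_iff).1 (by omega)
  · exfalso
    obtain ⟨p, hp⟩ := hc.exists_walk_length_eq_dist a c
    obtain ⟨q, hq⟩ := hc.exists_walk_length_eq_dist b c'
    have hP1len : (p.concat hcc').length = T.dist a c' := by
      rw [SimpleGraph.Walk.length_concat, hp]; omega
    have hP2len : (SimpleGraph.Walk.cons hab q).length = T.dist a c' := by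
      rw [SimpleGraph.Walk.length_cons, hq]; omega
    have hP1 : (p.concat hcc').IsPath := SimpleGraph.Walk.isPath_of_length_eq_dist _ hP1len
    have hP2 : (SimpleGraph.Walk.cons hab q).IsPath :=
      SimpleGraph.Walk.isPath_of_length_eq_dist _ hP2len
    have heq := aux_walk_eq ht.IsAcyclic _ _ hP1 hP2
    have hg1 : (p.concat hcc').getVert 1 = p.getVert 1 := by
      rw [SimpleGraph.Walk.concat_eq_append, SimpleGraph.Walk.getVert_append]
      rcases Nat.lt_or_ge 1 p.length with h | h
      · simp [h]
      · have hpl : p.length = 1 := by omega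
        rw [if_neg (by omega)]
        have : p.getVert 1 = c := by rw [← hpl]; exact p.getVert_length
        simp [hpl, this, SimpleGraph.Walk.getVert]
    have hg2 : (SimpleGraph.Walk.cons hab q).getVert 1 = b := by
      rw [SimpleGraph.Walk.getVert_cons_succ, SimpleGraph.Walk.getVert_zero]
    have hb' : p.getVert 1 = b := by rw [← hg1, heq, hg2]
    have := (aux_geo_getVert hc p hp (i := 1) (by omega)).2
    rw [hb'] at this
    rw [hp] at this
    omega

lemma aux_walk_flip {Q : V → Prop} {x y : V} (p : T.Walk x y) (hx : Q x) (hy : ¬ Q y) :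
    ∃ i, i < p.length ∧ Q (p.getVert i) ∧ ¬ Q (p.getVert (i+1)) := by
  induction p with
  | nil => exact absurd hx hy
  | @cons a b c h q ih =>
    by_cases hQb : Q b
    · obtain ⟨i, hi, h1, h2⟩ := ih hQb hy
      exact ⟨i + 1, by simpa using Nat.succ_lt_succ hi, h1, h2⟩
    · exact ⟨0, by simp [SimpleGraph.Walk.getVert], hx, by
        simpa [SimpleGraph.Walk.getVert_cons_succ, SimpleGraph.Walk.getVert_zero] using hQb⟩

lemma aux_cross_dist (ht : T.IsTree) {c c' w w' : V} (hcc' : T.Adj c c')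
    (hw : T.dist w c' = T.dist w c + 1) (hw' : T.dist w' c = T.dist w' c' + 1) :
    T.dist w w' = T.dist w c + 1 + T.dist c' w' := by
  have hc := ht.isConnected
  obtain ⟨p, hp⟩ := hc.exists_walk_length_eq_dist w w'
  obtain ⟨i, hi, h1, h2⟩ := aux_walk_flip (Q := fun v => T.dist v c' = T.dist v c + 1) p hw
    (by omega)
  have hadj := p.adj_getVert_succ hi
  have h2' : T.dist (p.getVert (i+1)) c = T.dist (p.getVert (i+1)) c' + 1 := by
    rcases aux_dist_adj_cases ht hcc' (p.getVert (i+1)) with h | h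
    · exact absurd h h2
    · exact h
  obtain ⟨hic, hic'⟩ := aux_cross ht hcc' h1 h2' hadj
  have g1 := (aux_geo_getVert hc p hp (i := i) (by omega)).1
  have g2 := (aux_geo_getVert hc p hp (i := i+1) (by omega)).2
  rw [hic] at g1
  rw [hic'] at g2
  rw [hp] at g2 hi
  omega

end aux3

section aux4
variable {V : Type*} [Fintype V] [DecidableEq V] {T : SimpleGraph V}

lemma aux_leaf_ext (ht : T.IsTree) (u w : V) :
    ∃ z, (T.degree z = 1 ∨ z = u) ∧ T.dist u z = T.dist u w + T.dist w z := by
  classical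
  have hc := ht.isConnected
  set A : Finset V := Finset.univ.filter (fun z => T.dist u z = T.dist u w + T.dist w z)
    with hA
  have hwA : w ∈ A := by simp [hA, SimpleGraph.dist_self]
  obtain ⟨z, hzA, hzmax⟩ := A.exists_max_image (fun z => T.dist u z) ⟨w, hwA⟩
  have hz : T.dist u z = T.dist u w + T.dist w z := by
    simpa [hA] using hzA
  by_cases hzu : z = u
  · exact ⟨z, Or.inr hzu, hz⟩
  refine ⟨z, Or.inl ?_, hz⟩
  have hd : 0 < T.dist u z := hc.pos_dist_of_ne (Ne.symm hzu)
  set d := T.dist u z with hdd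
  -- every neighbor of z is at distance d - 1 from u
  have hnbr : ∀ n, T.Adj z n → T.dist u n = d - 1 := by
    intro n hn
    rcases aux_dist_adj_cases ht hn u with h | h
    · exfalso
      have hwn : T.dist w n ≤ T.dist w z + 1 := by
        have := hc.dist_triangle (u := w) (v := z) (w := n)
        have : T.dist z n = 1 := SimpleGraph.dist_eq_one_iff_adj.2 hn
        omega
      have htr : T.dist u n ≤ T.dist u w + T.dist w n := hc.dist_triangle
      have hnA : n ∈ A := by
        simp only [hA, Finset.mem_filter, Finset.mem_univ, true_and]
        omega
      have := hzmax n hnA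
      omega
    · omega
  -- the penultimate vertex of a geodesic u → z is a neighbor
  obtain ⟨p, hp⟩ := hc.exists_walk_length_eq_dist u z
  have hpen : T.Adj z (p.getVert (d - 1)) := by
    have := p.adj_getVert_succ (i := d - 1) (by omega)
    have hgl : p.getVert (d - 1 + 1) = z := by
      have : d - 1 + 1 = p.length := by omega
      rw [this]; exact p.getVert_length
    rw [hgl] at this
    exact this.symm
  -- uniqueness of the neighbor
  have huniq : ∀ n, T.Adj z n → n = p.getVert (d - 1) := by
    intro n hn
    obtain ⟨q, hq⟩ := hc.exists_walk_length_eq_dist u n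
    have hdn : T.dist u n = d - 1 := hnbr n hn
    have hQlen : (q.concat hn.symm).length = T.dist u z := by
      rw [SimpleGraph.Walk.length_concat, hq]; omega
    have hQ : (q.concat hn.symm).IsPath := SimpleGraph.Walk.isPath_of_length_eq_dist _ hQlen
    have hP : p.IsPath := SimpleGraph.Walk.isPath_of_length_eq_dist _ hp
    have heq := aux_walk_eq ht.IsAcyclic _ _ hQ hP
    have hg : (q.concat hn.symm).getVert (d - 1) = n := by
      rw [SimpleGraph.Walk.concat_eq_append, SimpleGraph.Walk.getVert_append]
      rw [if_neg (by omega)]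
      have : d - 1 - q.length = 0 := by omega
      rw [this, SimpleGraph.Walk.getVert_zero]
    rw [← hg, heq]
  -- conclude degree = 1
  have hset : T.neighborFinset z = {p.getVert (d - 1)} := by
    apply Finset.eq_singleton_iff_unique_mem.2
    constructor
    · rw [SimpleGraph.mem_neighborFinset]; exact hpen
    · intro n hn
      exact huniq n ((SimpleGraph.mem_neighborFinset _ _ _).1 hn)
  simp [SimpleGraph.degree, hset]

end aux4

section aux5
variable {V : Type*} [DecidableEq V] {T : SimpleGraph V}

/-- if `w` is metrically between `c` and `z`, and `z` is on the `c`-side, so is `w`. -/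
lemma aux_side_prop (ht : T.IsTree) {c c' w z : V} (hcc' : T.Adj c c')
    (hmid : T.dist c w + T.dist w z = T.dist c z)
    (hzs : T.dist z c' = T.dist z c + 1) : T.dist w c' = T.dist w c + 1 := by
  rcases aux_dist_adj_cases ht hcc' w with h | h
  · exact h
  · exfalso
    have hzw := aux_cross_dist ht hcc' hzs h
    have c1 : T.dist w z = T.dist z w := SimpleGraph.dist_comm
    have c2 : T.dist z c = T.dist c z := SimpleGraph.dist_comm
    have c3 : T.dist c' w = T.dist w c' := SimpleGraph.dist_comm
    have c4 : T.dist c w = T.dist w c := SimpleGraph.dist_comm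
    omega

/-- if `w ≠ c` is metrically between `c` and `z` and on the `c`-side, so is `z`. -/
lemma aux_side_prop' (ht : T.IsTree) {c c' w z : V} (hcc' : T.Adj c c')
    (hmid : T.dist c w + T.dist w z = T.dist c z) (hwc : w ≠ c)
    (hws : T.dist w c' = T.dist w c + 1) : T.dist z c' = T.dist z c + 1 := by
  rcases aux_dist_adj_cases ht hcc' z with h | h
  · exact h
  · exfalso
    have hwz := aux_cross_dist ht hcc' hws h
    have c2 : T.dist z c = T.dist c z := SimpleGraph.dist_comm
    have c4 : T.dist c w = T.dist w c := SimpleGraph.dist_comm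
    have c5 : T.dist c' z = T.dist z c' := SimpleGraph.dist_comm
    have hpos : 0 < T.dist w c :=
      ht.isConnected.pos_dist_of_ne hwc
    omega

end aux5

section aux6
variable {V : Type*} [Fintype V] [DecidableEq V] {T : SimpleGraph V}

lemma aux_card_P (ht : T.IsTree) (c z : V) :
    (Finset.univ.filter
      (fun w => w ≠ c ∧ T.dist c w + T.dist w z = T.dist c z)).card = T.dist c z := by
  classical
  have hc := ht.isConnected
  obtain ⟨p, hp⟩ := hc.exists_walk_length_eq_dist c z
  have key : (Finset.univ.filter
      (fun w => w ≠ c ∧ T.dist c w + T.dist w z = T.dist c z)).card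
      = (Finset.Icc 1 (T.dist c z)).card := by
    apply Finset.card_bij (fun w _ => T.dist c w)
    · intro a ha
      simp only [Finset.mem_filter, Finset.mem_univ, true_and] at ha
      simp only [Finset.mem_Icc]
      have hpos : 0 < T.dist c a := hc.pos_dist_of_ne (Ne.symm ha.1)
      omega
    · intro a ha b hb hEq
      simp only [Finset.mem_filter, Finset.mem_univ, true_and] at ha hb
      have h1 := aux_on_geo ht ha.2 p hp
      have h2 := aux_on_geo ht hb.2 p hp
      rw [← h1, ← h2, hEq]
    · intro k hk
      simp only [Finset.mem_Icc] at hk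
      refine ⟨p.getVert k, ?_, ?_⟩
      · have hg := aux_geo_getVert hc p hp (i := k) (by omega)
        simp only [Finset.mem_filter, Finset.mem_univ, true_and]
        constructor
        · intro hEq
          rw [hEq] at hg
          rw [SimpleGraph.dist_self] at hg
          omega
        · omega
      · exact (aux_geo_getVert hc p hp (i := k) (by omega)).1
  rw [key, Nat.card_Icc]; omega

end aux6


/-- Let `b ≥ 3` and `r ≥ 1` be integers. Every tree with exactly `b`
leaves, diameter `2r + 1`, and exactly `br + 2` vertices is isomorphic to a crab graph
`CG(b - ℓ, ℓ, r)` for some integer `1 ≤ ℓ ≤ b - 1`. -/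
theorem stmt16 {V : Type*} [Fintype V] [DecidableEq V] (T : SimpleGraph V) (b r : ℕ)
    (hb : 3 ≤ b) (hr : 1 ≤ r) (hT : T.IsTree)
    (hleaves : (leavesFinset T).card = b) (hdiam : T.diam = 2 * r + 1)
    (hcard : Fintype.card V = b * r + 2) :
    ∃ ℓ : ℕ, 1 ≤ ℓ ∧ ℓ ≤ b - 1 ∧ Nonempty (T ≃g crabGraph (b - ℓ) ℓ r) := by
  classical
  have hc : T.Connected := hT.isConnected
  have hnV : Nonempty V := by
    rw [← Fintype.card_pos_iff, hcard]; omega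
  obtain ⟨x, y, hxy⟩ := T.exists_dist_eq_diam
  rw [hdiam] at hxy
  have hbnd : ∀ u v : V, T.dist u v ≤ 2 * r + 1 := by
    intro u v
    have h0 : T.diam ≠ 0 := by rw [hdiam]; omega
    have h1 := SimpleGraph.dist_le_diam (T.ediam_ne_top_of_diam_ne_zero h0) (u := u) (v := v)
    rw [hdiam] at h1; exact h1
  obtain ⟨p0, hp0⟩ := hc.exists_walk_length_eq_dist x y
  have hlen0 : p0.length = 2 * r + 1 := by rw [hp0, hxy]
  set u0 := p0.getVert r with hu0
  set v0 := p0.getVert (r + 1) with hv0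
  have hadj0 : T.Adj u0 v0 := p0.adj_getVert_succ (by omega)
  have hgu := aux_geo_getVert hc p0 hp0 (i := r) (by omega)
  have hgv := aux_geo_getVert hc p0 hp0 (i := r + 1) (by omega)
  have hxu0 : T.dist x u0 = r := hgu.1
  have hu0y : T.dist u0 y = r + 1 := by
    have h2 := hgu.2; rw [← hu0] at h2; omega
  have hxv0 : T.dist x v0 = r + 1 := hgv.1
  have hv0y : T.dist v0 y = r := by
    have h2 := hgv.2; rw [← hv0] at h2; omega
  -- sides
  have hside : ∀ w : V, T.dist w v0 = T.dist w u0 + 1 ∨ T.dist w u0 = T.dist w v0 + 1 :=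
    fun w => aux_dist_adj_cases hT hadj0 w
  have hUSx : T.dist x v0 = T.dist x u0 + 1 := by omega
  have hVSy : T.dist y u0 = T.dist y v0 + 1 := by
    have c1 : T.dist y u0 = T.dist u0 y := SimpleGraph.dist_comm
    have c2 : T.dist y v0 = T.dist v0 y := SimpleGraph.dist_comm
    omega
  have hUbound : ∀ w, T.dist w v0 = T.dist w u0 + 1 → T.dist w u0 ≤ r := by
    intro w hw
    have := aux_cross_dist hT hadj0 hw hVSy
    have hb1 := hbnd w y
    omega
  have hVbound : ∀ w, T.dist w u0 = T.dist w v0 + 1 → T.dist w v0 ≤ r := by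
    intro w hw
    have hx' : T.dist x v0 = T.dist x u0 + 1 := hUSx
    have := aux_cross_dist hT hadj0.symm hw hx'
    have hb1 := hbnd w x
    have c1 : T.dist u0 x = T.dist x u0 := SimpleGraph.dist_comm
    omega
  -- centers and branch sets
  set czf : V → V := fun z => if T.dist z v0 = T.dist z u0 + 1 then u0 else v0 with hczf
  set P : V → Finset V := fun z => Finset.univ.filter
    (fun w => w ≠ czf z ∧ T.dist (czf z) w + T.dist w z = T.dist (czf z) z) with hPdef
  have hcardP : ∀ z, (P z).card = T.dist (czf z) z := fun z => aux_card_P hT _ z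
  have hczu : ∀ z, T.dist z v0 = T.dist z u0 + 1 → czf z = u0 := by
    intro z h; simp only [hczf, if_pos h]
  have hczv : ∀ z, T.dist z u0 = T.dist z v0 + 1 → czf z = v0 := by
    intro z h; simp only [hczf]; rw [if_neg (by omega)]
  have hPbound : ∀ z, T.dist (czf z) z ≤ r := by
    intro z
    rcases hside z with h | h
    · rw [hczu z h]
      have := hUbound z h
      have c1 : T.dist u0 z = T.dist z u0 := SimpleGraph.dist_comm
      omega
    · rw [hczv z h]
      have := hVbound z h
      have c1 : T.dist v0 z = T.dist z v0 := SimpleGraph.dist_comm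
      omega
  -- covering
  have hLmem : ∀ z, z ∈ leavesFinset T ↔ T.degree z = 1 := by
    intro z; simp [leavesFinset]
  have hcov_u : ∀ w, w ≠ u0 → T.dist w v0 = T.dist w u0 + 1 →
      ∃ z, z ∈ leavesFinset T ∧ T.dist z v0 = T.dist z u0 + 1 ∧ w ∈ P z := by
    intro w hw hUS
    obtain ⟨z, hz1, hz2⟩ := aux_leaf_ext hT u0 w
    have hwu0 : 0 < T.dist u0 w := hc.pos_dist_of_ne (Ne.symm hw)
    have hzne : z ≠ u0 := by
      intro h; rw [h, SimpleGraph.dist_self] at hz2; omega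
    have hdeg : T.degree z = 1 := hz1.resolve_right hzne
    have hwc : T.dist w v0 = T.dist w u0 + 1 := hUS
    have hwcu : T.dist w u0 = T.dist u0 w := SimpleGraph.dist_comm
    have hmid : T.dist u0 w + T.dist w z = T.dist u0 z := hz2.symm
    have hws' : T.dist w v0 = T.dist w u0 + 1 := hUS
    have hUSz : T.dist z v0 = T.dist z u0 + 1 :=
      aux_side_prop' hT hadj0 hmid hw hws'
    refine ⟨z, (hLmem z).2 hdeg, hUSz, ?_⟩
    have hcz : czf z = u0 := hczu z hUSz
    simp only [hPdef, Finset.mem_filter, Finset.mem_univ, true_and, hcz]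
    exact ⟨hw, hmid⟩
  have hcov_v : ∀ w, w ≠ v0 → T.dist w u0 = T.dist w v0 + 1 →
      ∃ z, z ∈ leavesFinset T ∧ T.dist z u0 = T.dist z v0 + 1 ∧ w ∈ P z := by
    intro w hw hVS
    obtain ⟨z, hz1, hz2⟩ := aux_leaf_ext hT v0 w
    have hwv0 : 0 < T.dist v0 w := hc.pos_dist_of_ne (Ne.symm hw)
    have hzne : z ≠ v0 := by
      intro h; rw [h, SimpleGraph.dist_self] at hz2; omega
    have hdeg : T.degree z = 1 := hz1.resolve_right hzne
    have hmid : T.dist v0 w + T.dist w z = T.dist v0 z := hz2.symm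
    have hVSz : T.dist z u0 = T.dist z v0 + 1 :=
      aux_side_prop' hT hadj0.symm hmid hw hVS
    refine ⟨z, (hLmem z).2 hdeg, hVSz, ?_⟩
    have hcz : czf z = v0 := hczv z hVSz
    simp only [hPdef, Finset.mem_filter, Finset.mem_univ, true_and, hcz]
    exact ⟨hw, hmid⟩
  -- counting
  have hcover : (Finset.univ : Finset V) ⊆
      insert u0 (insert v0 ((leavesFinset T).biUnion P)) := by
    intro w _
    by_cases h1 : w = u0
    · simp [h1]
    by_cases h2 : w = v0
    · simp [h2]
    rcases hside w with h | h
    · obtain ⟨z, hzL, _, hzP⟩ := hcov_u w h1 h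
      simp only [Finset.mem_insert, Finset.mem_biUnion]
      exact Or.inr (Or.inr ⟨z, hzL, hzP⟩)
    · obtain ⟨z, hzL, _, hzP⟩ := hcov_v w h2 h
      simp only [Finset.mem_insert, Finset.mem_biUnion]
      exact Or.inr (Or.inr ⟨z, hzL, hzP⟩)
  have hsum : ∑ z ∈ leavesFinset T, T.dist (czf z) z = b * r := by
    have h1 : Fintype.card V ≤ 2 + ∑ z ∈ leavesFinset T, (P z).card := by
      calc Fintype.card V = (Finset.univ : Finset V).card := (Finset.card_univ).symm
        _ ≤ (insert u0 (insert v0 ((leavesFinset T).biUnion P))).card :=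
            Finset.card_le_card hcover
        _ ≤ 1 + (insert v0 ((leavesFinset T).biUnion P)).card := by
            have := Finset.card_insert_le u0 (insert v0 ((leavesFinset T).biUnion P))
            omega
        _ ≤ 1 + (1 + ((leavesFinset T).biUnion P).card) := by
            have := Finset.card_insert_le v0 ((leavesFinset T).biUnion P)
            omega
        _ ≤ 2 + ∑ z ∈ leavesFinset T, (P z).card := by
            have := Finset.card_biUnion_le (s := leavesFinset T) (t := P)
            omega
    have h2 : ∑ z ∈ leavesFinset T, (P z).card ≤ b * r := by
      calc ∑ z ∈ leavesFinset T, (P z).card ≤ ∑ _z ∈ leavesFinset T, r := by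
            apply Finset.sum_le_sum
            intro z _
            rw [hcardP z]; exact hPbound z
        _ = b * r := by rw [Finset.sum_const, hleaves, smul_eq_mul]
    have h3 : ∑ z ∈ leavesFinset T, (P z).card = ∑ z ∈ leavesFinset T, T.dist (czf z) z :=
      Finset.sum_congr rfl (fun z _ => hcardP z)
    rw [hcard] at h1
    omega
  have hdistr : ∀ z ∈ leavesFinset T, T.dist (czf z) z = r := by
    by_contra hcon
    push_neg at hcon
    obtain ⟨z0, hz0, hz0ne⟩ := hcon
    have hlt : ∑ z ∈ leavesFinset T, T.dist (czf z) z < ∑ _z ∈ leavesFinset T, r := by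
      apply Finset.sum_lt_sum (fun z _ => hPbound z)
      exact ⟨z0, hz0, lt_of_le_of_ne (hPbound z0) hz0ne⟩
    rw [Finset.sum_const, hleaves, smul_eq_mul, hsum] at hlt
    omega
  -- leaf sides
  set Lu := (leavesFinset T).filter (fun z => T.dist z v0 = T.dist z u0 + 1) with hLu
  set Lv := (leavesFinset T).filter (fun z => ¬ (T.dist z v0 = T.dist z u0 + 1)) with hLv
  have hLsplit : Lu.card + Lv.card = b := by
    rw [hLu, hLv, Finset.card_filter_add_card_filter_not]; exact hleaves
  have hxne : x ≠ u0 := by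
    intro h; rw [h, SimpleGraph.dist_self] at hxu0; omega
  have hyne : y ≠ v0 := by
    intro h
    rw [h] at hv0y; rw [SimpleGraph.dist_self] at hv0y; omega
  have hLuNe : Lu.Nonempty := by
    obtain ⟨z, hzL, hzS, _⟩ := hcov_u x hxne hUSx
    exact ⟨z, by rw [hLu]; exact Finset.mem_filter.2 ⟨hzL, hzS⟩⟩
  have hLvNe : Lv.Nonempty := by
    have hy' : T.dist y u0 = T.dist y v0 + 1 := hVSy
    obtain ⟨z, hzL, hzS, _⟩ := hcov_v y hyne hy'
    exact ⟨z, by rw [hLv]; exact Finset.mem_filter.2 ⟨hzL, by omega⟩⟩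
  set ℓ := Lv.card with hℓ
  have hl1 : 1 ≤ ℓ := Finset.card_pos.2 hLvNe
  have hl2 : ℓ ≤ b - 1 := by
    have := Finset.card_pos.2 hLuNe
    omega
  refine ⟨ℓ, hl1, hl2, ?_⟩
  -- branch radii
  have hru : ∀ z ∈ Lu, T.dist u0 z = r := by
    intro z hz
    rw [hLu, Finset.mem_filter] at hz
    have h := hdistr z hz.1
    rwa [hczu z hz.2] at h
  have hrv : ∀ z ∈ Lv, T.dist v0 z = r := by
    intro z hz
    rw [hLv, Finset.mem_filter] at hz
    have hVS : T.dist z u0 = T.dist z v0 + 1 := by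
      rcases hside z with h | h
      · exact absurd h hz.2
      · exact h
    have h := hdistr z hz.1
    rwa [hczv z hVS] at h
  choose g1 hg1 using fun z : V => hc.exists_walk_length_eq_dist u0 z
  choose g2 hg2 using fun z : V => hc.exists_walk_length_eq_dist v0 z
  have hg1len : ∀ z ∈ Lu, (g1 z).length = r := by
    intro z hz; rw [hg1 z, hru z hz]
  have hg2len : ∀ z ∈ Lv, (g2 z).length = r := by
    intro z hz; rw [hg2 z, hrv z hz]
  have hA1 : ∀ z ∈ Lu, ∀ i ≤ r,
      T.dist u0 ((g1 z).getVert i) = i ∧ T.dist ((g1 z).getVert i) z = r - i := by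
    intro z hz i hi
    have h := aux_geo_getVert hc (g1 z) (hg1 z) (i := i) (by rw [hg1len z hz]; exact hi)
    rw [hg1len z hz] at h
    exact h
  have hA2 : ∀ z ∈ Lv, ∀ i ≤ r,
      T.dist v0 ((g2 z).getVert i) = i ∧ T.dist ((g2 z).getVert i) z = r - i := by
    intro z hz i hi
    have h := aux_geo_getVert hc (g2 z) (hg2 z) (i := i) (by rw [hg2len z hz]; exact hi)
    rw [hg2len z hz] at h
    exact h
  have hS1 : ∀ z ∈ Lu, ∀ i ≤ r,
      T.dist ((g1 z).getVert i) v0 = T.dist ((g1 z).getVert i) u0 + 1 := by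
    intro z hz i hi
    have h := hA1 z hz i hi
    have hzS : T.dist z v0 = T.dist z u0 + 1 := (Finset.mem_filter.1 hz).2
    refine aux_side_prop hT hadj0 ?_ hzS
    have := hru z hz
    omega
  have hS2 : ∀ z ∈ Lv, ∀ i ≤ r,
      T.dist ((g2 z).getVert i) u0 = T.dist ((g2 z).getVert i) v0 + 1 := by
    intro z hz i hi
    have h := hA2 z hz i hi
    have hzS : T.dist z u0 = T.dist z v0 + 1 := by
      rcases hside z with h' | h'
      · exact absurd h' (Finset.mem_filter.1 hz).2
      · exact h'
    refine aux_side_prop hT hadj0.symm ?_ hzS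
    have := hrv z hz
    omega
  -- the bijection
  have hLucard : Lu.card = b - ℓ := by omega
  have hcardLu : Fintype.card {z // z ∈ Lu} = b - ℓ := by
    rw [Fintype.card_coe]; exact hLucard
  have hcardLv : Fintype.card {z // z ∈ Lv} = ℓ := by rw [Fintype.card_coe]
  set e1 : Fin (b - ℓ) ≃ {z // z ∈ Lu} := (Fintype.equivFinOfCardEq hcardLu).symm with he1
  set e2 : Fin ℓ ≃ {z // z ∈ Lv} := (Fintype.equivFinOfCardEq hcardLv).symm with he2
  set φ : (Fin (b - ℓ) × Fin r) ⊕ (Fin ℓ × Fin r) ⊕ Bool → V := fun a =>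
    match a with
    | Sum.inl (l, i) => (g1 (e1 l).1).getVert ((i : ℕ) + 1)
    | Sum.inr (Sum.inl (l, i)) => (g2 (e2 l).1).getVert ((i : ℕ) + 1)
    | Sum.inr (Sum.inr false) => u0
    | Sum.inr (Sum.inr true) => v0
    with hφ
  have hφ1 : ∀ (l : Fin (b - ℓ)) (i : Fin r),
      φ (Sum.inl (l, i)) = (g1 (e1 l).1).getVert ((i : ℕ) + 1) := by
    intro l i; rw [hφ]
  have hφ2 : ∀ (l : Fin ℓ) (i : Fin r),
      φ (Sum.inr (Sum.inl (l, i))) = (g2 (e2 l).1).getVert ((i : ℕ) + 1) := by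
    intro l i; rw [hφ]
  have hφf : φ (Sum.inr (Sum.inr false)) = u0 := by rw [hφ]
  have hφt : φ (Sum.inr (Sum.inr true)) = v0 := by rw [hφ]
  -- surjectivity
  have hsurj : Function.Surjective φ := by
    intro w
    by_cases hw1 : w = u0
    · exact ⟨Sum.inr (Sum.inr false), by rw [hφf, hw1]⟩
    by_cases hw2 : w = v0
    · exact ⟨Sum.inr (Sum.inr true), by rw [hφt, hw2]⟩
    rcases hside w with h | h
    · obtain ⟨z, hzL, hzS, hzP⟩ := hcov_u w hw1 h
      have hzLu : z ∈ Lu := Finset.mem_filter.2 ⟨hzL, hzS⟩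
      rw [hPdef] at hzP
      simp only [Finset.mem_filter, Finset.mem_univ, true_and, hczu z hzS] at hzP
      obtain ⟨hwne, hmid⟩ := hzP
      have hk1 : 1 ≤ T.dist u0 w := hc.pos_dist_of_ne (Ne.symm hw1)
      have hkr : T.dist u0 w ≤ r := by
        have := hru z hzLu; omega
      have hgw : (g1 z).getVert (T.dist u0 w) = w := aux_on_geo hT hmid (g1 z) (hg1 z)
      refine ⟨Sum.inl (e1.symm ⟨z, hzLu⟩, ⟨T.dist u0 w - 1, by omega⟩), ?_⟩
      rw [hφ1]
      rw [Equiv.apply_symm_apply]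
      have he : ((⟨T.dist u0 w - 1, by omega⟩ : Fin r) : ℕ) + 1 = T.dist u0 w := by
        simp; omega
      rw [he, hgw]
    · obtain ⟨z, hzL, hzS, hzP⟩ := hcov_v w hw2 h
      have hzLv : z ∈ Lv := Finset.mem_filter.2 ⟨hzL, by omega⟩
      rw [hPdef] at hzP
      simp only [Finset.mem_filter, Finset.mem_univ, true_and, hczv z hzS] at hzP
      obtain ⟨hwne, hmid⟩ := hzP
      have hk1 : 1 ≤ T.dist v0 w := hc.pos_dist_of_ne (Ne.symm hw2)
      have hkr : T.dist v0 w ≤ r := by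
        have := hrv z hzLv; omega
      have hgw : (g2 z).getVert (T.dist v0 w) = w := aux_on_geo hT hmid (g2 z) (hg2 z)
      refine ⟨Sum.inr (Sum.inl (e2.symm ⟨z, hzLv⟩, ⟨T.dist v0 w - 1, by omega⟩)), ?_⟩
      rw [hφ2]
      rw [Equiv.apply_symm_apply]
      have he : ((⟨T.dist v0 w - 1, by omega⟩ : Fin r) : ℕ) + 1 = T.dist v0 w := by
        simp; omega
      rw [he, hgw]
  have hφcard : Fintype.card ((Fin (b - ℓ) × Fin r) ⊕ (Fin ℓ × Fin r) ⊕ Bool)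
      = Fintype.card V := by
    rw [hcard]
    simp only [Fintype.card_sum, Fintype.card_prod, Fintype.card_fin, Fintype.card_bool]
    have hmul : (b - ℓ) * r + ℓ * r = b * r := by
      rw [← Nat.add_mul]
      congr 1
      omega
    omega
  have hbij : Function.Bijective φ := by
    rw [Fintype.bijective_iff_surjective_and_card]
    exact ⟨hsurj, hφcard⟩
  have hinj := hbij.1
  -- distance facts for φ
  have hd1 : ∀ (l : Fin (b - ℓ)) (i : Fin r),
      T.dist u0 (φ (Sum.inl (l, i))) = (i : ℕ) + 1 := by
    intro l i
    rw [hφ1]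
    exact (hA1 (e1 l).1 (e1 l).2 ((i : ℕ) + 1) (by omega)).1
  have hd2 : ∀ (l : Fin ℓ) (i : Fin r),
      T.dist v0 (φ (Sum.inr (Sum.inl (l, i)))) = (i : ℕ) + 1 := by
    intro l i
    rw [hφ2]
    exact (hA2 (e2 l).1 (e2 l).2 ((i : ℕ) + 1) (by omega)).1
  have hside1 : ∀ (l : Fin (b - ℓ)) (i : Fin r),
      T.dist (φ (Sum.inl (l, i))) v0 = T.dist (φ (Sum.inl (l, i))) u0 + 1 := by
    intro l i
    rw [hφ1]
    exact hS1 (e1 l).1 (e1 l).2 ((i : ℕ) + 1) (by omega)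
  have hside2 : ∀ (l : Fin ℓ) (i : Fin r),
      T.dist (φ (Sum.inr (Sum.inl (l, i)))) u0
        = T.dist (φ (Sum.inr (Sum.inl (l, i)))) v0 + 1 := by
    intro l i
    rw [hφ2]
    exact hS2 (e2 l).1 (e2 l).2 ((i : ℕ) + 1) (by omega)
  have hUSu0 : T.dist u0 v0 = T.dist u0 u0 + 1 := by
    rw [SimpleGraph.dist_self, SimpleGraph.dist_eq_one_iff_adj.2 hadj0]
  have hVSv0 : T.dist v0 u0 = T.dist v0 v0 + 1 := by
    rw [SimpleGraph.dist_self, SimpleGraph.dist_eq_one_iff_adj.2 hadj0.symm]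
  -- key merging lemmas
  have key1 : ∀ (l m : Fin (b - ℓ)) (i j : Fin r), ((j : ℕ) = (i : ℕ) + 1) →
      T.Adj (φ (Sum.inl (l, i))) (φ (Sum.inl (m, j))) → l = m := by
    intro l m i j hji hadjAB
    have hdA := hd1 l i
    have hdB := hd1 m j
    have hBz := by
      exact (hA1 (e1 m).1 (e1 m).2 ((j : ℕ) + 1) (by omega)).2
    have hAB1 : T.dist (φ (Sum.inl (l, i))) (φ (Sum.inl (m, j))) = 1 :=
      SimpleGraph.dist_eq_one_iff_adj.2 hadjAB
    have htri1 : T.dist (φ (Sum.inl (l, i))) ((e1 m).1 : V)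
        ≤ T.dist (φ (Sum.inl (l, i))) (φ (Sum.inl (m, j)))
          + T.dist (φ (Sum.inl (m, j))) ((e1 m).1 : V) := hc.dist_triangle
    have htri2 : T.dist u0 ((e1 m).1 : V)
        ≤ T.dist u0 (φ (Sum.inl (l, i))) + T.dist (φ (Sum.inl (l, i))) ((e1 m).1 : V) :=
      hc.dist_triangle
    have hrzm : T.dist u0 ((e1 m).1 : V) = r := hru (e1 m).1 (e1 m).2
    rw [← hφ1 m j] at hBz
    have hmid : T.dist u0 (φ (Sum.inl (l, i)))
        + T.dist (φ (Sum.inl (l, i))) ((e1 m).1 : V) = T.dist u0 ((e1 m).1 : V) := by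
      have hjr := j.2
      omega
    have hong := aux_on_geo hT hmid (g1 (e1 m).1) (hg1 (e1 m).1)
    rw [hdA] at hong
    have hEq : φ (Sum.inl (m, i)) = φ (Sum.inl (l, i)) := by
      rw [hφ1 m i]
      exact hong
    have h2 : (Sum.inl (m, i) : Fin (b - ℓ) × Fin r ⊕ Fin ℓ × Fin r ⊕ Bool)
        = Sum.inl (l, i) := hinj hEq
    simp only [Sum.inl.injEq, Prod.mk.injEq] at h2
    exact h2.1.symm
  have key2 : ∀ (l m : Fin ℓ) (i j : Fin r), ((j : ℕ) = (i : ℕ) + 1) →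
      T.Adj (φ (Sum.inr (Sum.inl (l, i)))) (φ (Sum.inr (Sum.inl (m, j)))) → l = m := by
    intro l m i j hji hadjAB
    have hdA := hd2 l i
    have hdB := hd2 m j
    have hBz := by
      exact (hA2 (e2 m).1 (e2 m).2 ((j : ℕ) + 1) (by omega)).2
    have hAB1 : T.dist (φ (Sum.inr (Sum.inl (l, i)))) (φ (Sum.inr (Sum.inl (m, j)))) = 1 :=
      SimpleGraph.dist_eq_one_iff_adj.2 hadjAB
    have htri1 : T.dist (φ (Sum.inr (Sum.inl (l, i)))) ((e2 m).1 : V)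
        ≤ T.dist (φ (Sum.inr (Sum.inl (l, i)))) (φ (Sum.inr (Sum.inl (m, j))))
          + T.dist (φ (Sum.inr (Sum.inl (m, j)))) ((e2 m).1 : V) := hc.dist_triangle
    have htri2 : T.dist v0 ((e2 m).1 : V)
        ≤ T.dist v0 (φ (Sum.inr (Sum.inl (l, i))))
          + T.dist (φ (Sum.inr (Sum.inl (l, i)))) ((e2 m).1 : V) := hc.dist_triangle
    have hrzm : T.dist v0 ((e2 m).1 : V) = r := hrv (e2 m).1 (e2 m).2
    rw [← hφ2 m j] at hBz
    have hmid : T.dist v0 (φ (Sum.inr (Sum.inl (l, i))))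
        + T.dist (φ (Sum.inr (Sum.inl (l, i)))) ((e2 m).1 : V)
        = T.dist v0 ((e2 m).1 : V) := by
      have hjr := j.2
      omega
    have hong := aux_on_geo hT hmid (g2 (e2 m).1) (hg2 (e2 m).1)
    rw [hdA] at hong
    have hEq : φ (Sum.inr (Sum.inl (m, i))) = φ (Sum.inr (Sum.inl (l, i))) := by
      rw [hφ2 m i]
      exact hong
    have h2 : (Sum.inr (Sum.inl (m, i)) : Fin (b - ℓ) × Fin r ⊕ Fin ℓ × Fin r ⊕ Bool)
        = Sum.inr (Sum.inl (l, i)) := hinj hEq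
    simp only [Sum.inr.injEq, Sum.inl.injEq, Prod.mk.injEq] at h2
    exact h2.1.symm
  -- adjacency along branches
  have hadjS1 : ∀ (l : Fin (b - ℓ)) (i : ℕ), i < r →
      T.Adj ((g1 (e1 l).1).getVert i) ((g1 (e1 l).1).getVert (i + 1)) := by
    intro l i hi
    exact (g1 (e1 l).1).adj_getVert_succ (by rw [hg1len (e1 l).1 (e1 l).2]; exact hi)
  have hadjS2 : ∀ (l : Fin ℓ) (i : ℕ), i < r →
      T.Adj ((g2 (e2 l).1).getVert i) ((g2 (e2 l).1).getVert (i + 1)) := by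
    intro l i hi
    exact (g2 (e2 l).1).adj_getVert_succ (by rw [hg2len (e2 l).1 (e2 l).2]; exact hi)
  have hAdjIff : ∀ a a', T.Adj (φ a) (φ a') ↔ (crabGraph (b - ℓ) ℓ r).Adj a a' := by
    intro a a'
    constructor
    · intro h
      have hne : a ≠ a' := by
        rintro rfl
        exact T.loopless.irrefl _ h
      unfold crabGraph
      rw [SimpleGraph.fromRel_adj]
      refine ⟨hne, ?_⟩
      rcases a with ⟨l, i⟩ | ⟨⟨l, i⟩ | bo⟩ <;> rcases a' with ⟨m, j⟩ | ⟨⟨m, j⟩ | bo'⟩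
      -- inl / inl
      · rcases aux_dist_adj_cases hT h u0 with hcase | hcase
        · have hji : (j : ℕ) = (i : ℕ) + 1 := by
            have h1 := hd1 l i; have h2 := hd1 m j; omega
          exact Or.inl ⟨key1 l m i j hji h, hji⟩
        · have hij : (i : ℕ) = (j : ℕ) + 1 := by
            have h1 := hd1 l i; have h2 := hd1 m j; omega
          exact Or.inr ⟨key1 m l j i hij h.symm, hij⟩
      -- inl / inr inl
      · exfalso
        have hx := aux_cross hT hadj0 (hside1 l i) (hside2 m j) h
        have hcon := hd1 l i
        rw [hx.1, SimpleGraph.dist_self] at hcon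
        omega
      -- inl / inr inr bo'
      · rcases bo' with _ | _
        · -- bo' = false : adjacent to u0
          rw [hφf] at h
          have h1 : T.dist u0 (φ (Sum.inl (l, i))) = 1 :=
            SimpleGraph.dist_eq_one_iff_adj.2 h.symm
          have h2 := hd1 l i
          exact Or.inr (by omega)
        · -- bo' = true : adjacent to v0, impossible for u-side branch vertex
          exfalso
          rw [hφt] at h
          have hx := aux_cross hT hadj0 (hside1 l i) hVSv0 h
          have hcon := hd1 l i
          rw [hx.1, SimpleGraph.dist_self] at hcon
          omega
      -- inr inl / inl
      · exfalso
        have hx := aux_cross hT hadj0 (hside1 m j) (hside2 l i) h.symm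
        have hcon := hd1 m j
        rw [hx.1, SimpleGraph.dist_self] at hcon
        omega
      -- inr inl / inr inl
      · rcases aux_dist_adj_cases hT h v0 with hcase | hcase
        · have hji : (j : ℕ) = (i : ℕ) + 1 := by
            have h1 := hd2 l i; have h2 := hd2 m j; omega
          exact Or.inl ⟨key2 l m i j hji h, hji⟩
        · have hij : (i : ℕ) = (j : ℕ) + 1 := by
            have h1 := hd2 l i; have h2 := hd2 m j; omega
          exact Or.inr ⟨key2 m l j i hij h.symm, hij⟩
      -- inr inl / inr inr bo'
      · rcases bo' with _ | _
        · exfalso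
          rw [hφf] at h
          have hx := aux_cross hT hadj0.symm (hside2 l i) hUSu0 h
          have hcon := hd2 l i
          rw [hx.1, SimpleGraph.dist_self] at hcon
          omega
        · rw [hφt] at h
          have h1 : T.dist v0 (φ (Sum.inr (Sum.inl (l, i)))) = 1 :=
            SimpleGraph.dist_eq_one_iff_adj.2 h.symm
          have h2 := hd2 l i
          exact Or.inr (by omega)
      -- inr inr bo / inl
      · rcases bo with _ | _
        · rw [hφf] at h
          have h1 : T.dist u0 (φ (Sum.inl (m, j))) = 1 :=
            SimpleGraph.dist_eq_one_iff_adj.2 h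
          have h2 := hd1 m j
          exact Or.inl (by omega)
        · exfalso
          rw [hφt] at h
          have hx := aux_cross hT hadj0 (hside1 m j) hVSv0 h.symm
          have hcon := hd1 m j
          rw [hx.1, SimpleGraph.dist_self] at hcon
          omega
      -- inr inr bo / inr inl
      · rcases bo with _ | _
        · exfalso
          rw [hφf] at h
          have hx := aux_cross hT hadj0.symm (hside2 m j) hUSu0 h.symm
          have hcon := hd2 m j
          rw [hx.1, SimpleGraph.dist_self] at hcon
          omega
        · rw [hφt] at h
          have h1 : T.dist v0 (φ (Sum.inr (Sum.inl (m, j)))) = 1 :=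
            SimpleGraph.dist_eq_one_iff_adj.2 h
          have h2 := hd2 m j
          exact Or.inl (by omega)
      -- inr inr bo / inr inr bo'
      · rcases bo with _ | _ <;> rcases bo' with _ | _
        · exact absurd rfl hne
        · exact Or.inl trivial
        · exact Or.inr trivial
        · exact absurd rfl hne
    · intro h
      unfold crabGraph at h
      rw [SimpleGraph.fromRel_adj] at h
      obtain ⟨hne, hrel⟩ := h
      rcases a with ⟨l, i⟩ | ⟨⟨l, i⟩ | bo⟩ <;> rcases a' with ⟨m, j⟩ | ⟨⟨m, j⟩ | bo'⟩
      -- inl / inl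
      · have hrel' : (l = m ∧ (j : ℕ) = (i : ℕ) + 1) ∨ (m = l ∧ (i : ℕ) = (j : ℕ) + 1) := hrel
        rcases hrel' with ⟨hlm, hji⟩ | ⟨hml, hij⟩
        · subst hlm
          rw [hφ1, hφ1]
          have hrw : (j : ℕ) + 1 = ((i : ℕ) + 1) + 1 := by omega
          rw [hrw]
          exact hadjS1 l ((i : ℕ) + 1) (by have := j.2; omega)
        · subst hml
          rw [hφ1, hφ1]
          have hrw : (i : ℕ) + 1 = ((j : ℕ) + 1) + 1 := by omega
          rw [hrw]
          exact (hadjS1 m ((j : ℕ) + 1) (by have := i.2; omega)).symm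
      -- inl / inr inl : impossible
      · have hrel' : False ∨ False := hrel
        rcases hrel' with h | h <;> exact h.elim
      -- inl / inr inr bo'
      · rcases bo' with _ | _
        · have hrel' : False ∨ (i : ℕ) = 0 := hrel
          have hi0 : (i : ℕ) = 0 := by rcases hrel' with h | h; exact h.elim; exact h
          rw [hφ1, hφf]
          have h0 := hadjS1 l 0 (by omega)
          rw [SimpleGraph.Walk.getVert_zero] at h0
          have hrw : (i : ℕ) + 1 = 0 + 1 := by omega
          rw [hrw]
          exact h0.symm
        · have hrel' : False ∨ False := hrel
          rcases hrel' with h | h <;> exact h.elim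
      -- inr inl / inl : impossible
      · have hrel' : False ∨ False := hrel
        rcases hrel' with h | h <;> exact h.elim
      -- inr inl / inr inl
      · have hrel' : (l = m ∧ (j : ℕ) = (i : ℕ) + 1) ∨ (m = l ∧ (i : ℕ) = (j : ℕ) + 1) := hrel
        rcases hrel' with ⟨hlm, hji⟩ | ⟨hml, hij⟩
        · subst hlm
          rw [hφ2, hφ2]
          have hrw : (j : ℕ) + 1 = ((i : ℕ) + 1) + 1 := by omega
          rw [hrw]
          exact hadjS2 l ((i : ℕ) + 1) (by have := j.2; omega)
        · subst hml
          rw [hφ2, hφ2]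
          have hrw : (i : ℕ) + 1 = ((j : ℕ) + 1) + 1 := by omega
          rw [hrw]
          exact (hadjS2 m ((j : ℕ) + 1) (by have := i.2; omega)).symm
      -- inr inl / inr inr bo'
      · rcases bo' with _ | _
        · have hrel' : False ∨ False := hrel
          rcases hrel' with h | h <;> exact h.elim
        · have hrel' : False ∨ (i : ℕ) = 0 := hrel
          have hi0 : (i : ℕ) = 0 := by rcases hrel' with h | h; exact h.elim; exact h
          rw [hφ2, hφt]
          have h0 := hadjS2 l 0 (by omega)
          rw [SimpleGraph.Walk.getVert_zero] at h0
          have hrw : (i : ℕ) + 1 = 0 + 1 := by omega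
          rw [hrw]
          exact h0.symm
      -- inr inr bo / inl
      · rcases bo with _ | _
        · have hrel' : ((j : ℕ) = 0) ∨ False := hrel
          have hj0 : (j : ℕ) = 0 := by rcases hrel' with h | h; exact h; exact h.elim
          rw [hφ1, hφf]
          have h0 := hadjS1 m 0 (by omega)
          rw [SimpleGraph.Walk.getVert_zero] at h0
          have hrw : (j : ℕ) + 1 = 0 + 1 := by omega
          rw [hrw]
          exact h0
        · have hrel' : False ∨ False := hrel
          rcases hrel' with h | h <;> exact h.elim
      -- inr inr bo / inr inl
      · rcases bo with _ | _
        · have hrel' : False ∨ False := hrel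
          rcases hrel' with h | h <;> exact h.elim
        · have hrel' : ((j : ℕ) = 0) ∨ False := hrel
          have hj0 : (j : ℕ) = 0 := by rcases hrel' with h | h; exact h; exact h.elim
          rw [hφ2, hφt]
          have h0 := hadjS2 m 0 (by omega)
          rw [SimpleGraph.Walk.getVert_zero] at h0
          have hrw : (j : ℕ) + 1 = 0 + 1 := by omega
          rw [hrw]
          exact h0
      -- inr inr bo / inr inr bo'
      · rcases bo with _ | _ <;> rcases bo' with _ | _
        · exact absurd rfl hne
        · rw [hφf, hφt]; exact hadj0
        · rw [hφf, hφt]; exact hadj0.symm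
        · exact absurd rfl hne
  have iso : crabGraph (b - ℓ) ℓ r ≃g T :=
    { toEquiv := Equiv.ofBijective φ hbij
      map_rel_iff' := by
        intro a a'
        exact hAdjIff a a' }
  exact ⟨iso.symm⟩
end

section
/- Let T be a tree with exactly b ≥ 2 leaves and n vertices, and let r ≥ 1 be an integer. If the diameter of T is at most 2r, then n ≤ br + 1; if the diameter of T is at most 2r−1, then n ≤ b(r−1) + 2. -/
open scoped BigOperators
open Classical

section TreeAux

open SimpleGraph Walk

variable {V : Type*} [Fintype V] [DecidableEq V] {T : SimpleGraph V}

/-- The unique path between two vertices of a tree. -/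
noncomputable def tpath (hT : T.IsTree) (u v : V) : T.Walk u v :=
  (hT.existsUnique_path u v).choose

lemma tpath_isPath (hT : T.IsTree) (u v : V) : (tpath hT u v).IsPath :=
  (hT.existsUnique_path u v).choose_spec.1

lemma eq_tpath (hT : T.IsTree) {u v : V} (p : T.Walk u v) (hp : p.IsPath) :
    p = tpath hT u v :=
  (hT.existsUnique_path u v).choose_spec.2 p hp

lemma length_tpath (hT : T.IsTree) (u v : V) :
    (tpath hT u v).length = T.dist u v := by
  obtain ⟨w, hw⟩ := hT.isConnected.exists_walk_length_eq_dist u v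
  have h1 : w.bypass = tpath hT u v := eq_tpath hT _ w.bypass_isPath
  have h2 := w.length_bypass_le
  have h3 := T.dist_le (tpath hT u v)
  rw [h1] at h2
  omega

lemma dist_split (hT : T.IsTree) {a b z : V} (hz : z ∈ (tpath hT a b).support) :
    T.dist a z + T.dist z b = T.dist a b := by
  have h1 : ((tpath hT a b).takeUntil z hz).length = T.dist a z := by
    rw [eq_tpath hT _ ((tpath_isPath hT a b).takeUntil hz), length_tpath]
  have h2 : ((tpath hT a b).dropUntil z hz).length = T.dist z b := by
    rw [eq_tpath hT _ ((tpath_isPath hT a b).dropUntil hz), length_tpath]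
  have h3 := congrArg Walk.length ((tpath hT a b).take_spec hz)
  rw [Walk.length_append] at h3
  rw [← length_tpath hT a b]
  omega

lemma dist_getVert_le (hT : T.IsTree) {u v : V} (p : T.Walk u v) (i : ℕ) :
    T.dist u (p.getVert i) ≤ i := by
  induction i with
  | zero => simp [Walk.getVert_zero]
  | succ i ih =>
    by_cases hi : i < p.length
    · have hadj := p.adj_getVert_succ hi
      have h2 := hT.isConnected.dist_triangle (u := u) (v := p.getVert i) (w := p.getVert (i+1))
      have h3 : T.dist (p.getVert i) (p.getVert (i+1)) ≤ 1 :=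
        T.dist_le (Walk.cons hadj Walk.nil)
      omega
    · rw [p.getVert_of_length_le (by omega), ← p.getVert_of_length_le (le_of_not_gt hi)]
      omega

lemma dist_tpath_getVert (hT : T.IsTree) (u v : V) {i : ℕ} (hi : i ≤ T.dist u v) :
    T.dist u ((tpath hT u v).getVert i) = i := by
  set p := tpath hT u v with hp
  have hlen : p.length = T.dist u v := length_tpath hT u v
  have h1 : T.dist u (p.getVert i) ≤ i := dist_getVert_le hT p i
  have h2 : T.dist (p.getVert i) v ≤ p.length - i := by
    have h := dist_getVert_le hT p.reverse (p.length - i)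
    rw [Walk.getVert_reverse] at h
    have h4 : p.length - (p.length - i) = i := by omega
    rw [h4] at h
    rw [T.dist_comm]
    exact h
  have h3 := hT.isConnected.dist_triangle (u := u) (v := p.getVert i) (w := v)
  omega

lemma tpath_getVert_mem_support (hT : T.IsTree) (u v : V) {i : ℕ}
    (hi : i ≤ T.dist u v) : (tpath hT u v).getVert i ∈ (tpath hT u v).support :=
  Walk.mem_support_iff_exists_getVert.mpr ⟨i, rfl, by rw [length_tpath]; exact hi⟩

lemma isPath_concat' {u v w : V} {p : T.Walk u v} (hp : p.IsPath) (h : T.Adj v w)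
    (hw : w ∉ p.support) : (p.concat h).IsPath := by
  rw [Walk.isPath_def, Walk.support_concat]
  simp [List.nodup_append, hp.support_nodup, hw]
  exact fun a ha hEq => hw (hEq ▸ ha)

lemma end_not_mem_takeUntil (hT : T.IsTree) {c v w : V}
    (hw : w ∈ (tpath hT c v).support) (hne : w ≠ v) :
    v ∉ ((tpath hT c v).takeUntil w hw).support := by
  set p := tpath hT c v with hpdef
  have hnd : p.support.Nodup := (tpath_isPath hT c v).support_nodup
  have hsp : p.support = (p.takeUntil w hw).support ++ (p.dropUntil w hw).support.tail := by
    conv_lhs => rw [← p.take_spec hw]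
    exact Walk.support_append _ _
  rw [hsp] at hnd
  have hvtail : v ∈ (p.dropUntil w hw).support.tail := by
    have h1 := (p.dropUntil w hw).support_eq_cons
    have h2 := (p.dropUntil w hw).end_mem_support
    rw [h1] at h2
    rcases List.mem_cons.mp h2 with h | h
    · exact absurd h.symm hne
    · exact h
  intro hvq
  exact (List.disjoint_of_nodup_append hnd) hvq hvtail

/-- In a tree, distances from a fixed vertex to two adjacent vertices differ by exactly one. -/
lemma dist_adj_tree (hT : T.IsTree) (c : V) {v w : V} (hvw : T.Adj v w) :
    T.dist c w = T.dist c v + 1 ∨ T.dist c v = T.dist c w + 1 := by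
  set p := tpath hT c v with hpdef
  by_cases hw : w ∈ p.support
  · right
    have hne : w ≠ v := hvw.ne'
    set q := p.takeUntil w hw with hqdef
    have hq : q.IsPath := (tpath_isPath hT c v).takeUntil hw
    have hvnot : v ∉ q.support := end_not_mem_takeUntil hT hw hne
    have hpath : (q.concat hvw.symm).IsPath := isPath_concat' hq hvw.symm hvnot
    have heq : q.concat hvw.symm = tpath hT c v := eq_tpath hT _ hpath
    have hlen := congrArg Walk.length heq
    rw [Walk.length_concat, length_tpath hT c v] at hlen
    have hq' : q.length = T.dist c w := by
      rw [eq_tpath hT q hq, length_tpath]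
    omega
  · left
    have hpath : (p.concat hvw).IsPath := isPath_concat' (tpath_isPath hT c v) hvw hw
    have heq : p.concat hvw = tpath hT c w := eq_tpath hT _ hpath
    have hlen := congrArg Walk.length heq
    rw [Walk.length_concat, length_tpath hT c w] at hlen
    have : p.length = T.dist c v := length_tpath hT c v
    omega

lemma mem_tpath_or (hT : T.IsTree) {u v c : V} (x : V)
    (hc : c ∈ (tpath hT u v).support) :
    c ∈ (tpath hT u x).support ∨ c ∈ (tpath hT x v).support := by
  set W := (tpath hT u x).append (tpath hT x v) with hWdef
  have hbp : W.bypass = tpath hT u v := eq_tpath hT _ W.bypass_isPath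
  have h1 : c ∈ W.support := by
    rw [← hbp] at hc
    exact W.support_bypass_subset hc
  rw [hWdef, Walk.support_append] at h1
  rcases List.mem_append.mp h1 with h | h
  · exact Or.inl h
  · exact Or.inr (List.mem_of_mem_tail h)


/-- Any path from `c` to `v ≠ c` in a tree can be extended to a path from `c` to a leaf. -/
lemma exists_leaf_ext (hT : T.IsTree) :
    ∀ (N : ℕ) (c v : V), T.dist c v ≠ 0 → Fintype.card V ≤ N + T.dist c v →
    ∃ ℓ, T.degree ℓ = 1 ∧ ∃ q : T.Walk v ℓ, ((tpath hT c v).append q).IsPath := by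
  intro N
  induction N with
  | zero =>
    intro c v hne hcard
    have h1 : (tpath hT c v).length < Fintype.card V := (tpath_isPath hT c v).length_lt
    rw [length_tpath] at h1
    omega
  | succ N ih =>
    intro c v hne hcard
    by_cases hdeg : T.degree v = 1
    · exact ⟨v, hdeg, Walk.nil, by simpa using tpath_isPath hT c v⟩
    · set p := tpath hT c v with hpdef
      have hplen : p.length = T.dist c v := length_tpath hT c v
      have hlpos : 0 < p.length := by omega
      -- the penultimate vertex of p
      set u0 := p.getVert (p.length - 1) with hu0
      have hadj0 : T.Adj u0 v := by
        have := p.adj_getVert_succ (i := p.length - 1) (by omega)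
        have he : p.length - 1 + 1 = p.length := by omega
        rw [he, p.getVert_length] at this
        exact this
      have hdegpos : 1 < T.degree v := by
        have h1 : 0 < T.degree v := by
          rw [← T.card_neighborFinset_eq_degree, Finset.card_pos]
          exact ⟨u0, (T.mem_neighborFinset v u0).mpr hadj0.symm⟩
        omega
      obtain ⟨w, hwmem, hwne⟩ := Finset.exists_mem_ne
        (by rwa [T.card_neighborFinset_eq_degree]) u0
      have hvw : T.Adj v w := (T.mem_neighborFinset v w).mp hwmem
      have hwnotp : w ∉ p.support := by
        intro hwp
        have hnev : w ≠ v := hvw.ne'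
        set q := p.takeUntil w hwp with hqdef
        have hq : q.IsPath := (tpath_isPath hT c v).takeUntil hwp
        have hvnot : v ∉ q.support := end_not_mem_takeUntil hT hwp hnev
        have hpath : (q.concat hvw.symm).IsPath := isPath_concat' hq hvw.symm hvnot
        have heq : q.concat hvw.symm = p := (eq_tpath hT _ hpath).trans hpdef.symm
        -- then the penultimate vertex of p is w, contradiction
        have hlen : q.length + 1 = p.length := by
          have := congrArg Walk.length heq
          rwa [Walk.length_concat] at this
        have : p.getVert (p.length - 1) = w := by
          have h5 : p.length - 1 = q.length := by omega
          rw [h5, ← heq, Walk.concat_eq_append, Walk.getVert_append]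
          simp
        exact hwne (hu0 ▸ this.symm)
      have hpath : (p.concat hvw).IsPath := isPath_concat' (tpath_isPath hT c v) hvw hwnotp
      have heq : p.concat hvw = tpath hT c w := eq_tpath hT _ hpath
      have hdistw : T.dist c w = T.dist c v + 1 := by
        have hlen := congrArg Walk.length heq
        rw [Walk.length_concat, length_tpath hT c w] at hlen
        omega
      obtain ⟨ℓ, hdegℓ, qw, hqw⟩ := ih c w (by omega) (by omega)
      refine ⟨ℓ, hdegℓ, Walk.cons hvw qw, ?_⟩
      have hrw : (tpath hT c v).append (Walk.cons hvw qw)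
          = ((tpath hT c v).concat hvw).append qw := (Walk.concat_append _ _ _).symm
      rw [hrw, ← hpdef, heq]
      exact hqw

/-- For every non-center vertex `v` of a tree there is a leaf `ℓ` such that `v` lies on
the unique path from `c` to `ℓ` at position `dist c v`. -/
lemma exists_leaf (hT : T.IsTree) {c v : V} (hvc : v ≠ c) :
    ∃ ℓ, T.degree ℓ = 1 ∧ T.dist c ℓ = T.dist c v + T.dist v ℓ ∧
      v = (tpath hT c ℓ).getVert (T.dist c v) := by
  have hdpos : 0 < T.dist c v := hT.isConnected.pos_dist_of_ne (Ne.symm hvc)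
  obtain ⟨ℓ, hdeg, q, hpath⟩ := exists_leaf_ext hT (Fintype.card V) c v (by omega) (by omega)
  have hbig : (tpath hT c v).append q = tpath hT c ℓ := eq_tpath hT _ hpath
  have hq : q.IsPath := hpath.of_append_right
  have hqlen : q.length = T.dist v ℓ := by rw [eq_tpath hT q hq, length_tpath]
  have hplen : (tpath hT c v).length = T.dist c v := length_tpath hT c v
  have hsum : T.dist c ℓ = T.dist c v + T.dist v ℓ := by
    have := congrArg Walk.length hbig
    rw [Walk.length_append, length_tpath hT c ℓ] at this
    omega
  refine ⟨ℓ, hdeg, hsum, ?_⟩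
  rw [← hbig, Walk.getVert_append]
  simp [hplen]


lemma card_le_of_center (hT : T.IsTree) (c : V) (k : ℕ)
    (hecc : ∀ x, T.dist c x ≤ k) :
    Fintype.card V ≤ (Finset.univ.filter fun v => T.degree v = 1).card * k + 1 := by
  classical
  set L : Finset V := Finset.univ.filter fun v => T.degree v = 1 with hL
  have key : ∀ x : {x : V // x ≠ c}, ∃ (l : {l : V // l ∈ L}) (m : Fin k),
      (x : V) = (tpath hT c l).getVert (m + 1) := by
    rintro ⟨v, hv⟩
    obtain ⟨ℓ, hdeg, _, hgv⟩ := exists_leaf hT hv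
    have hd1 : 0 < T.dist c v := hT.isConnected.pos_dist_of_ne (Ne.symm hv)
    have hdk : T.dist c v ≤ k := hecc v
    refine ⟨⟨ℓ, by simp [hL, hdeg]⟩, ⟨T.dist c v - 1, by omega⟩, ?_⟩
    simpa [Nat.sub_add_cancel hd1] using hgv
  choose f g hfg using key
  have hinj : Function.Injective (fun x : {x : V // x ≠ c} => (f x, g x)) := by
    intro x y h
    rw [Prod.mk.injEq] at h
    apply Subtype.ext
    rw [hfg x, hfg y, h.1, h.2]
  have hcard := Fintype.card_le_of_injective _ hinj
  rw [Fintype.card_prod, Fintype.card_coe, Fintype.card_fin] at hcard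
  have h2 : (Finset.univ : Finset V) ⊆
      (Finset.univ.filter fun x => x ≠ c) ∪ {c} := by
    intro x _
    by_cases hx : x = c <;> simp [hx]
  have h3 := Finset.card_le_card h2
  have h4 := Finset.card_union_le (Finset.univ.filter fun x : V => x ≠ c) {c}
  have h5 : (Finset.univ.filter fun x : V => x ≠ c).card = Fintype.card {x : V // x ≠ c} :=
    (Fintype.card_subtype _).symm
  simp only [Finset.card_univ, Finset.card_singleton] at h3 h4
  omega

lemma card_le_of_two_centers (hT : T.IsTree) (c1 c2 : V) (hadj : T.Adj c1 c2) (k : ℕ)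
    (hecc : ∀ x, T.dist c1 x ≤ k ∨ T.dist c2 x ≤ k) :
    Fintype.card V ≤ (Finset.univ.filter fun v => T.degree v = 1).card * k + 2 := by
  classical
  set L : Finset V := Finset.univ.filter fun v => T.degree v = 1 with hL
  have key : ∀ x : {x : V // x ≠ c1 ∧ x ≠ c2}, ∃ (l : {l : V // l ∈ L}) (m : Fin k),
      (T.dist c1 l < T.dist c2 l ∧ (x : V) = (tpath hT c2 l).getVert (m + 2)) ∨
      (T.dist c2 l < T.dist c1 l ∧ (x : V) = (tpath hT c1 l).getVert (m + 2)) := by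
    rintro ⟨v, hv1, hv2⟩
    have hd1 : 0 < T.dist v c1 := hT.isConnected.pos_dist_of_ne hv1
    have hd2 : 0 < T.dist v c2 := hT.isConnected.pos_dist_of_ne hv2
    have hecc' := hecc v
    rw [T.dist_comm (u := c1) (v := v), T.dist_comm (u := c2) (v := v)] at hecc'
    rcases dist_adj_tree hT v hadj with h | h
    · -- dist v c2 = dist v c1 + 1 : v is closer to c1, extend from c2
      obtain ⟨ℓ, hdeg, hsum, hgv⟩ := exists_leaf hT (c := c2) hv2
      rw [T.dist_comm (u := c2) (v := v)] at hsum
      have hside : T.dist c1 ℓ < T.dist c2 ℓ := by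
        have htri := hT.isConnected.dist_triangle (u := c1) (v := v) (w := ℓ)
        rw [T.dist_comm (u := c1) (v := v)] at htri
        omega
      have hk1 : T.dist v c1 ≤ k := by omega
      refine ⟨⟨ℓ, by simp [hL, hdeg]⟩, ⟨T.dist v c1 - 1, by omega⟩, Or.inl ⟨hside, ?_⟩⟩
      have hm : T.dist v c1 - 1 + 2 = T.dist c2 v := by
        rw [T.dist_comm (u := c2) (v := v)]; omega
      rw [hm]
      exact hgv
    · -- dist v c1 = dist v c2 + 1 : v is closer to c2, extend from c1
      obtain ⟨ℓ, hdeg, hsum, hgv⟩ := exists_leaf hT (c := c1) hv1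
      rw [T.dist_comm (u := c1) (v := v)] at hsum
      have hside : T.dist c2 ℓ < T.dist c1 ℓ := by
        have htri := hT.isConnected.dist_triangle (u := c2) (v := v) (w := ℓ)
        rw [T.dist_comm (u := c2) (v := v)] at htri
        omega
      have hk1 : T.dist v c2 ≤ k := by omega
      refine ⟨⟨ℓ, by simp [hL, hdeg]⟩, ⟨T.dist v c2 - 1, by omega⟩, Or.inr ⟨hside, ?_⟩⟩
      have hm : T.dist v c2 - 1 + 2 = T.dist c1 v := by
        rw [T.dist_comm (u := c1) (v := v)]; omega
      rw [hm]
      exact hgv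
  choose f g hfg using key
  have hinj : Function.Injective
      (fun x : {x : V // x ≠ c1 ∧ x ≠ c2} => (f x, g x)) := by
    intro x y h
    rw [Prod.mk.injEq] at h
    apply Subtype.ext
    have hx := hfg x
    have hy := hfg y
    rw [h.1, h.2] at hx
    rcases hx with ⟨hs1, he1⟩ | ⟨hs1, he1⟩ <;> rcases hy with ⟨hs2, he2⟩ | ⟨hs2, he2⟩
    · rw [he1, he2]
    · omega
    · omega
    · rw [he1, he2]
  have hcard := Fintype.card_le_of_injective _ hinj
  rw [Fintype.card_prod, Fintype.card_coe, Fintype.card_fin] at hcard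
  have h2 : (Finset.univ : Finset V) ⊆
      (Finset.univ.filter fun x => x ≠ c1 ∧ x ≠ c2) ∪ {c1, c2} := by
    intro x _
    by_cases hx1 : x = c1
    · simp [hx1]
    · by_cases hx2 : x = c2 <;> simp [hx1, hx2]
  have h3 := Finset.card_le_card h2
  have h4 := Finset.card_union_le (Finset.univ.filter fun x : V => x ≠ c1 ∧ x ≠ c2)
    ({c1, c2} : Finset V)
  have h5 : (Finset.univ.filter fun x : V => x ≠ c1 ∧ x ≠ c2).card
      = Fintype.card {x : V // x ≠ c1 ∧ x ≠ c2} := (Fintype.card_subtype _).symm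
  have h6 : ({c1, c2} : Finset V).card ≤ 2 := Finset.card_insert_le _ _ |>.trans (by simp)
  simp only [Finset.card_univ] at h3 h4
  omega


lemma main_even (hT : T.IsTree) (u v : V) (k : ℕ) (hd : T.dist u v ≤ 2 * k)
    (hu : ∀ x, T.dist u x ≤ T.dist u v) (hv : ∀ x, T.dist x v ≤ T.dist u v) :
    Fintype.card V ≤ (Finset.univ.filter fun w => T.degree w = 1).card * k + 1 := by
  by_cases hk : T.dist u v ≤ k
  · exact card_le_of_center hT u k (fun x => (hu x).trans hk)
  · push_neg at hk
    set c := (tpath hT u v).getVert k with hc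
    have hcs : c ∈ (tpath hT u v).support := tpath_getVert_mem_support hT u v (by omega)
    have huc : T.dist u c = k := dist_tpath_getVert hT u v (by omega)
    have hsplit := dist_split hT hcs
    apply card_le_of_center hT c k
    intro x
    rcases mem_tpath_or hT x hcs with h | h
    · have h1 := dist_split hT h
      have h2 := hu x
      omega
    · have h1 := dist_split hT h
      have h2 := hv x
      have h3 : T.dist c x = T.dist x c := T.dist_comm (u := c) (v := x)
      omega

lemma main_odd (hT : T.IsTree) (u v : V) (k : ℕ) (hd : T.dist u v = 2 * k + 1)
    (hu : ∀ x, T.dist u x ≤ T.dist u v) (hv : ∀ x, T.dist x v ≤ T.dist u v) :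
    Fintype.card V ≤ (Finset.univ.filter fun w => T.degree w = 1).card * k + 2 := by
  set c1 := (tpath hT u v).getVert k with hc1
  set c2 := (tpath hT u v).getVert (k + 1) with hc2
  have hc1s : c1 ∈ (tpath hT u v).support := tpath_getVert_mem_support hT u v (by omega)
  have hc2s : c2 ∈ (tpath hT u v).support := tpath_getVert_mem_support hT u v (by omega)
  have huc1 : T.dist u c1 = k := dist_tpath_getVert hT u v (by omega)
  have huc2 : T.dist u c2 = k + 1 := dist_tpath_getVert hT u v (by omega)
  have hs1 := dist_split hT hc1s
  have hs2 := dist_split hT hc2s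
  have hadj : T.Adj c1 c2 := by
    have := (tpath hT u v).adj_getVert_succ (i := k)
      (by rw [length_tpath hT u v, hd]; omega)
    exact this
  apply card_le_of_two_centers hT c1 c2 hadj k
  intro x
  rcases mem_tpath_or hT x hc1s with h1 | h1
  · rcases mem_tpath_or hT x hc2s with h2 | h2
    · have := dist_split hT h2
      have := hu x
      right; omega
    · have ha1 := dist_split hT h1
      have ha2 := dist_split hT h2
      have hb1 := hu x
      have hb2 := hv x
      have hcomm1 : T.dist c1 x = T.dist x c1 := T.dist_comm (u := c1) (v := x)
      have hcomm2 : T.dist c2 x = T.dist x c2 := T.dist_comm (u := c2) (v := x)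
      rcases dist_adj_tree hT x hadj with h | h <;> omega
  · have := dist_split hT h1
    have := hv x
    have hcomm1 : T.dist c1 x = T.dist x c1 := T.dist_comm (u := c1) (v := x)
    left; omega

end TreeAux

/-- Let `T` be a tree with exactly `b ≥ 2` leaves and `n` vertices, and
let `r ≥ 1` be an integer. If the diameter of `T` is at most `2r`, then `n ≤ br + 1`;
if the diameter of `T` is at most `2r - 1`, then `n ≤ b(r-1) + 2`. -/
theorem stmt17 {V : Type*} [Fintype V] [DecidableEq V] (T : SimpleGraph V)
    (hT : T.IsTree) (b n r : ℕ) (hb : 2 ≤ b) (hr : 1 ≤ r)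
    (hleaves : (leavesFinset T).card = b) (hn : Fintype.card V = n) :
    (T.diam ≤ 2 * r → n ≤ b * r + 1) ∧
    (T.diam ≤ 2 * r - 1 → n ≤ b * (r - 1) + 2) := by
  classical
  have hLb : (Finset.univ.filter fun w => T.degree w = 1).card = b := by
    rw [← hleaves, leavesFinset]
  haveI hne : Nonempty V := by
    have h1 : 0 < (leavesFinset T).card := by omega
    obtain ⟨l, -⟩ := Finset.card_pos.mp h1
    exact ⟨l⟩
  have hfin : T.ediam ≠ ⊤ := by
    have hle : T.ediam ≤ (Fintype.card V : ℕ∞) := by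
      apply SimpleGraph.ediam_le_of_edist_le
      intro x y
      calc T.edist x y ≤ ((tpath hT x y).length : ℕ∞) := (tpath hT x y).edist_le
        _ ≤ (Fintype.card V : ℕ∞) := by
            exact_mod_cast le_of_lt (tpath_isPath hT x y).length_lt
    exact ne_top_of_le_ne_top (WithTop.natCast_ne_top _) hle
  obtain ⟨u, v, huv⟩ := T.exists_dist_eq_diam
  have hall : ∀ x y, T.dist x y ≤ T.dist u v := by
    intro x y
    rw [huv]
    exact SimpleGraph.dist_le_diam hfin
  constructor
  · intro hdiam
    have hd : T.dist u v ≤ 2 * r := by rw [huv]; exact hdiam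
    have hmain := main_even hT u v r hd (fun x => hall u x) (fun x => hall x v)
    rw [hLb] at hmain
    omega
  · intro hdiam
    have hd : T.dist u v ≤ 2 * r - 1 := by rw [huv]; exact hdiam
    rcases Nat.even_or_odd (T.dist u v) with ⟨k, hk⟩ | ⟨k, hk⟩
    · have hkr : k ≤ r - 1 := by omega
      have hmain := main_even hT u v k (by omega) (fun x => hall u x) (fun x => hall x v)
      rw [hLb] at hmain
      have hmul : b * k ≤ b * (r - 1) := Nat.mul_le_mul_left b hkr
      omega
    · have hkr : k ≤ r - 1 := by omega
      have hmain := main_odd hT u v k (by omega) (fun x => hall u x) (fun x => hall x v)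
      rw [hLb] at hmain
      have hmul : b * k ≤ b * (r - 1) := Nat.mul_le_mul_left b hkr
      omega
end

section
/- Let G = (V,E) be a finite connected simple graph with nonempty boundary B ⊊ V, let L be the Laplacian matrix of G, and for each real r > 0 let L^{(r)} = D^{(r)} L D^{(r)}, with eigenvalues μ_1^{(r)} ≤ μ_2^{(r)} ≤ ⋯ ≤ μ_{|V|}^{(r)} listed in increasing order with multiplicity. Then for 1 ≤ k ≤ |B| one has lim_{r→+∞} μ_k^{(r)} = σ_k(G,B), and for |B| < k ≤ |V| one has lim_{r→+∞} μ_k^{(r)} = +∞. -/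
open scoped BigOperators
open Classical

/-- The `k`-th smallest eigenvalue (1-indexed, in increasing order with multiplicity) of a
symmetric real matrix, via the variational (Courant–Fischer) characterization. -/
noncomputable def sortedEigenvalue {V : Type*} [Fintype V] (M : Matrix V V ℝ) (k : ℕ) : ℝ :=
  sInf { t : ℝ | ∃ F : Submodule ℝ (V → ℝ), Module.finrank ℝ F = k ∧
    ∀ f ∈ F, (∑ x : V, ∑ y : V, f x * M x y * f y) ≤ t * ∑ x : V, (f x) ^ 2 }

/-- The diagonal matrix `D^{(r)}` with entry `1` on boundary vertices and `r` elsewhere. -/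
noncomputable def diagMatrixD {V : Type*} [Fintype V] [DecidableEq V] (B : Finset V)
    (r : ℝ) : Matrix V V ℝ :=
  Matrix.diagonal fun x => if x ∈ B then (1 : ℝ) else r

namespace Stmt18Aux

open Finset

variable {V : Type*} [Fintype V] [DecidableEq V]

/-- The quadratic form of a matrix. -/
noncomputable def quadForm (M : Matrix V V ℝ) (f : V → ℝ) : ℝ :=
  ∑ x : V, ∑ y : V, f x * M x y * f y

/-- Restriction to the boundary, as a linear map. -/
noncomputable def resB (B : Finset V) : (V → ℝ) →ₗ[ℝ] ({v // v ∈ B} → ℝ) :=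
  LinearMap.funLeft ℝ ℝ (fun x : {v // v ∈ B} => (x : V))

/-- The diagonal weight function. -/
noncomputable def dd (B : Finset V) (r : ℝ) : V → ℝ := fun x => if x ∈ B then (1 : ℝ) else r

lemma dd_ne (B : Finset V) {r : ℝ} (hr : 0 < r) : ∀ x, dd B r x ≠ 0 := by
  intro x; unfold dd; split <;> [norm_num; exact ne_of_gt hr]

/-- The set appearing in `sortedEigenvalue`. -/
def SSet (M : Matrix V V ℝ) (k : ℕ) : Set ℝ :=
  { t : ℝ | ∃ F : Submodule ℝ (V → ℝ), Module.finrank ℝ F = k ∧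
    ∀ f ∈ F, quadForm M f ≤ t * ∑ x : V, (f x) ^ 2 }

/-- The set appearing in `steklovEig`. -/
def TSet (G : SimpleGraph V) (B : Finset V) (k : ℕ) : Set ℝ :=
  { t : ℝ | ∃ F : Submodule ℝ (V → ℝ),
    Module.finrank ℝ (F.map (resB B)) = k ∧
    ∀ f ∈ F, dirichletEnergy G f ≤ t * ∑ x ∈ B, (f x) ^ 2 }

lemma sortedEigenvalue_eq (M : Matrix V V ℝ) (k : ℕ) :
    sortedEigenvalue M k = sInf (SSet M k) := rfl

lemma steklovEig_eq (G : SimpleGraph V) (B : Finset V) (k : ℕ) :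
    steklovEig G B k = sInf (TSet G B k) := rfl

lemma dE_eq (G : SimpleGraph V) [DecidableRel G.Adj] (f : V → ℝ) :
    dirichletEnergy G f
      = (∑ x : V, ∑ y : V, if G.Adj x y then (f x - f y) ^ 2 else 0) / 2 := by
  unfold dirichletEnergy
  congr 1
  refine Finset.sum_congr rfl fun i _ => Finset.sum_congr rfl fun j _ => ?_
  by_cases h : G.Adj i j <;> simp [h]

lemma dE_nonneg (G : SimpleGraph V) [DecidableRel G.Adj] (f : V → ℝ) :
    0 ≤ dirichletEnergy G f := by
  rw [dE_eq]
  apply div_nonneg _ (by norm_num)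
  refine Finset.sum_nonneg fun x _ => Finset.sum_nonneg fun y _ => ?_
  split <;> positivity

lemma quad_lap (G : SimpleGraph V) [DecidableRel G.Adj] (f : V → ℝ) :
    quadForm (G.lapMatrix ℝ) f = dirichletEnergy G f := by
  have h := SimpleGraph.lapMatrix_toLinearMap₂' (R := ℝ) G f
  rw [Matrix.toLinearMap₂'_apply] at h
  unfold quadForm
  rw [dE_eq, ← h]
  exact Finset.sum_congr rfl fun x _ => Finset.sum_congr rfl fun y _ => by
    simp only [smul_eq_mul]; ring

lemma quad_diag (M : Matrix V V ℝ) (d : V → ℝ) (f : V → ℝ) :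
    quadForm (Matrix.diagonal d * M * Matrix.diagonal d) f
      = quadForm M (fun x => d x * f x) := by
  unfold quadForm
  refine Finset.sum_congr rfl fun x _ => Finset.sum_congr rfl fun y _ => ?_
  have h : (Matrix.diagonal d * M * Matrix.diagonal d) x y = d x * M x y * d y := by
    rw [Matrix.mul_diagonal, Matrix.diagonal_mul]
  rw [h]; ring

lemma edge_sq_le (G : SimpleGraph V) [DecidableRel G.Adj] (f : V → ℝ) {x y : V}
    (h : G.Adj x y) : (f x - f y) ^ 2 ≤ 2 * dirichletEnergy G f := by
  rw [dE_eq, mul_div_cancel₀ _ (two_ne_zero)]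
  calc (f x - f y) ^ 2 = (if G.Adj x y then (f x - f y) ^ 2 else 0) := by rw [if_pos h]
    _ ≤ ∑ b : V, (if G.Adj x b then (f x - f b) ^ 2 else 0) :=
        Finset.single_le_sum (f := fun b => if G.Adj x b then (f x - f b) ^ 2 else 0)
          (fun i _ => by split <;> positivity) (Finset.mem_univ y)
    _ ≤ ∑ a : V, ∑ b : V, (if G.Adj a b then (f a - f b) ^ 2 else 0) :=
        Finset.single_le_sum
          (f := fun a => ∑ b : V, if G.Adj a b then (f a - f b) ^ 2 else 0)
          (fun i _ => Finset.sum_nonneg fun j _ => by split <;> positivity)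
          (Finset.mem_univ x)

lemma walk_bound (G : SimpleGraph V) [DecidableRel G.Adj] (f : V → ℝ) {x y : V}
    (p : G.Walk x y) :
    |f x - f y| ≤ p.length * Real.sqrt (2 * dirichletEnergy G f) := by
  induction p with
  | nil => simp
  | @cons u v w h q ih =>
      have h1 : |f u - f v| ≤ Real.sqrt (2 * dirichletEnergy G f) := by
        rw [← Real.sqrt_sq_eq_abs]
        exact Real.sqrt_le_sqrt (edge_sq_le G f h)
      have h2 : |f u - f w| ≤ |f u - f v| + |f v - f w| := by
        have := abs_add_le (f u - f v) (f v - f w); simpa using this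
      rw [SimpleGraph.Walk.length_cons]
      push_cast
      calc |f u - f w| ≤ |f u - f v| + |f v - f w| := h2
        _ ≤ Real.sqrt (2 * dirichletEnergy G f)
              + q.length * Real.sqrt (2 * dirichletEnergy G f) := add_le_add h1 ih
        _ = (q.length + 1) * Real.sqrt (2 * dirichletEnergy G f) := by ring

/-- The Poincaré constant. -/
noncomputable def pC (n : ℕ) : ℝ := 4 * n ^ 3 + 2 * n

lemma pC_pos {n : ℕ} (hn : 1 ≤ n) : 0 < pC n := by
  unfold pC
  have h1 : (1 : ℝ) ≤ n := by exact_mod_cast hn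
  have h2 : (0 : ℝ) ≤ 4 * (n : ℝ) ^ 3 := by positivity
  linarith

lemma poincare (G : SimpleGraph V) [DecidableRel G.Adj] (hc : G.Connected)
    (B : Finset V) (hB : B.Nonempty) (f : V → ℝ) :
    ∑ x : V, f x ^ 2
      ≤ pC (Fintype.card V) * ((∑ x ∈ B, f x ^ 2) + dirichletEnergy G f) := by
  obtain ⟨b, hb⟩ := hB
  set n : ℕ := Fintype.card V with hn
  set E : ℝ := dirichletEnergy G f with hE
  have hE0 : 0 ≤ E := dE_nonneg G f
  have hpoint : ∀ x : V, f x ^ 2 ≤ 2 * f b ^ 2 + 2 * ((n : ℝ) ^ 2 * (2 * E)) := by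
    intro x
    obtain ⟨w⟩ := hc.preconnected x b
    have hlen : (w.bypass.length : ℝ) ≤ (n : ℝ) := by
      have := w.bypass_isPath.length_lt
      exact_mod_cast le_of_lt this
    have h1 : |f x - f b| ≤ (n : ℝ) * Real.sqrt (2 * E) :=
      le_trans (walk_bound G f w.bypass)
        (mul_le_mul_of_nonneg_right hlen (Real.sqrt_nonneg _))
    have h2 : (f x - f b) ^ 2 ≤ (n : ℝ) ^ 2 * (2 * E) := by
      have hs : ((n : ℝ) * Real.sqrt (2 * E)) ^ 2 = (n : ℝ) ^ 2 * (2 * E) := by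
        rw [mul_pow, Real.sq_sqrt (by linarith)]
      calc (f x - f b) ^ 2 = |f x - f b| ^ 2 := by rw [sq_abs]
        _ ≤ ((n : ℝ) * Real.sqrt (2 * E)) ^ 2 := by
            apply pow_le_pow_left₀ (abs_nonneg _) h1
        _ = (n : ℝ) ^ 2 * (2 * E) := hs
    nlinarith [h2, sq_nonneg (f x - 2 * f b)]
  have hsum : ∑ x : V, f x ^ 2 ≤ (n : ℝ) * (2 * f b ^ 2 + 2 * ((n : ℝ) ^ 2 * (2 * E))) := by
    calc ∑ x : V, f x ^ 2 ≤ ∑ _x : V, (2 * f b ^ 2 + 2 * ((n : ℝ) ^ 2 * (2 * E))) :=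
          Finset.sum_le_sum fun x _ => hpoint x
      _ = (n : ℝ) * (2 * f b ^ 2 + 2 * ((n : ℝ) ^ 2 * (2 * E))) := by
          rw [Finset.sum_const, Finset.card_univ, nsmul_eq_mul]
  have hfb : f b ^ 2 ≤ ∑ x ∈ B, f x ^ 2 :=
    Finset.single_le_sum (f := fun x => f x ^ 2) (fun i _ => sq_nonneg (f i)) hb
  have hBnn : 0 ≤ ∑ x ∈ B, f x ^ 2 := Finset.sum_nonneg fun i _ => sq_nonneg _
  have hn1 : (1 : ℝ) ≤ (n : ℝ) := by
    have : 0 < n := Fintype.card_pos_iff.mpr ⟨b⟩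
    exact_mod_cast this
  have key : (n : ℝ) * (2 * f b ^ 2 + 2 * ((n : ℝ) ^ 2 * (2 * E)))
      ≤ pC n * ((∑ x ∈ B, f x ^ 2) + E) := by
    unfold pC
    have h1 : 2 * (n:ℝ) * f b ^ 2 ≤ 2 * (n:ℝ) * ∑ x ∈ B, f x ^ 2 := by nlinarith
    have h2 : (0:ℝ) ≤ 4 * (n:ℝ) ^ 3 * ∑ x ∈ B, f x ^ 2 := by positivity
    have h3 : (0:ℝ) ≤ 2 * (n:ℝ) * E := by nlinarith
    nlinarith
  linarith [hsum, key]

lemma dE_le (G : SimpleGraph V) [DecidableRel G.Adj] (f : V → ℝ) :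
    dirichletEnergy G f ≤ 2 * (Fintype.card V : ℝ) * ∑ x : V, f x ^ 2 := by
  rw [dE_eq]
  rw [div_le_iff₀ (by norm_num : (0:ℝ) < 2)]
  calc ∑ x : V, ∑ y : V, (if G.Adj x y then (f x - f y) ^ 2 else 0)
      ≤ ∑ x : V, ∑ y : V, (2 * f x ^ 2 + 2 * f y ^ 2) := by
        refine Finset.sum_le_sum fun x _ => Finset.sum_le_sum fun y _ => ?_
        split
        · nlinarith [sq_nonneg (f x + f y)]
        · positivity
    _ = 2 * (Fintype.card V : ℝ) * (∑ x : V, f x ^ 2)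
          + 2 * (Fintype.card V : ℝ) * (∑ x : V, f x ^ 2) := by
        simp only [Finset.sum_add_distrib, Finset.sum_const, Finset.card_univ,
          nsmul_eq_mul, ← Finset.mul_sum, ← Finset.sum_mul]
        ring
    _ = 2 * (Fintype.card V : ℝ) * (∑ x : V, f x ^ 2) * 2 := by ring

lemma sum_sq_nonneg (f : V → ℝ) : 0 ≤ ∑ x : V, f x ^ 2 :=
  Finset.sum_nonneg fun i _ => sq_nonneg _

lemma sum_sq_pos {f : V → ℝ} (hf : f ≠ 0) : 0 < ∑ x : V, f x ^ 2 := by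
  obtain ⟨x, hx⟩ := Function.ne_iff.mp hf
  exact Finset.sum_pos' (fun i _ => sq_nonneg (f i))
    ⟨x, Finset.mem_univ x, (sq_nonneg (f x)).lt_of_ne (Ne.symm (pow_ne_zero 2 hx))⟩

lemma sum_sq_eq_zero {f : V → ℝ} (h : ∑ x : V, f x ^ 2 ≤ 0) : f = 0 := by
  by_contra hf
  exact absurd h (not_le.mpr (sum_sq_pos hf))

lemma exists_ne_zero_of_finrank {M : Type*} [AddCommGroup M] [Module ℝ M]
    (F : Submodule ℝ M) {k : ℕ} (hk : 1 ≤ k) (hrk : Module.finrank ℝ F = k) :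
    ∃ f ∈ F, f ≠ (0 : M) := by
  by_contra h
  push_neg at h
  have hbot : F = ⊥ := (Submodule.eq_bot_iff F).mpr h
  rw [hbot, finrank_bot] at hrk
  omega

/-- the multiplication-by-`d` linear equivalence. -/
noncomputable def mulEquiv (d : V → ℝ) (hd : ∀ x, d x ≠ 0) : (V → ℝ) ≃ₗ[ℝ] (V → ℝ) :=
  LinearEquiv.piCongrRight fun x => LinearEquiv.smulOfNeZero ℝ ℝ (d x) (hd x)

lemma mulEquiv_apply (d : V → ℝ) (hd : ∀ x, d x ≠ 0) (f : V → ℝ) (x : V) :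
    mulEquiv d hd f x = d x * f x := rfl

lemma resB_apply (B : Finset V) (f : V → ℝ) (b : {v // v ∈ B}) :
    resB B f b = f (b : V) := rfl

lemma finrank_map_of_inj {W : Type*} [AddCommGroup W] [Module ℝ W]
    (F : Submodule ℝ (V → ℝ)) (ρ : (V → ℝ) →ₗ[ℝ] W)
    (h : ∀ f ∈ F, ρ f = 0 → f = 0) :
    Module.finrank ℝ (F.map ρ) = Module.finrank ℝ F := by
  have hrange : F.map ρ = LinearMap.range (ρ.comp F.subtype) := by
    rw [LinearMap.range_comp, Submodule.range_subtype]
  rw [hrange]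
  apply LinearMap.finrank_range_of_inj
  intro a b hab
  have hsub : ρ ((a : V → ℝ) - (b : V → ℝ)) = 0 := by
    rw [map_sub]
    simpa [LinearMap.comp_apply] using sub_eq_zero.mpr hab
  have := h ((a : V → ℝ) - (b : V → ℝ)) (sub_mem a.2 b.2) hsub
  exact Subtype.ext (sub_eq_zero.mp this)

lemma exists_le_finrank {W : Type*} [AddCommGroup W] [Module ℝ W]
    (F : Submodule ℝ (V → ℝ)) (ρ : (V → ℝ) →ₗ[ℝ] W) :
    ∃ F' : Submodule ℝ (V → ℝ), F' ≤ F ∧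
      Module.finrank ℝ F' = Module.finrank ℝ (F.map ρ) := by
  let φ : F →ₗ[ℝ] (F.map ρ) :=
    (ρ.domRestrict F).codRestrict (F.map ρ)
      (fun c => Submodule.mem_map_of_mem c.2)
  have hsurj : LinearMap.range φ = ⊤ := by
    rw [LinearMap.range_eq_top]
    rintro ⟨y, hy⟩
    obtain ⟨x, hxF, hx⟩ := hy
    exact ⟨⟨x, hxF⟩, Subtype.ext hx⟩
  obtain ⟨ψ, hψ⟩ := φ.exists_rightInverse_of_surjective hsurj
  have hinj : Function.Injective ψ := by
    intro a b hab
    have ha := LinearMap.ext_iff.mp hψ a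
    have hb := LinearMap.ext_iff.mp hψ b
    simp only [LinearMap.comp_apply, LinearMap.id_apply] at ha hb
    rw [← ha, ← hb, hab]
  refine ⟨(LinearMap.range ψ).map F.subtype, Submodule.map_subtype_le _ _, ?_⟩
  rw [Submodule.finrank_map_subtype_eq]
  exact LinearMap.finrank_range_of_inj hinj

lemma singles_subspace (B S : Finset V) (hSB : S ⊆ B) :
    ∃ F : Submodule ℝ (V → ℝ),
      Module.finrank ℝ F = S.card ∧
      Module.finrank ℝ (F.map (resB B)) = S.card ∧
      ∀ f ∈ F, ∀ x, x ∉ S → f x = 0 := by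
  classical
  set v : S → (V → ℝ) := fun s => Pi.single (s : V) (1 : ℝ) with hv_def
  have hv : LinearIndependent ℝ v := by
    have h := (Pi.basisFun ℝ V).linearIndependent.comp
      (fun s : S => (s : V)) Subtype.val_injective
    have : (fun s : S => (Pi.basisFun ℝ V) (s : V)) = v := by
      funext s; rw [Pi.basisFun_apply]
    rwa [show ((Pi.basisFun ℝ V) ∘ fun s : S => (s : V))
          = (fun s : S => (Pi.basisFun ℝ V) (s : V)) from rfl, this] at h
  refine ⟨Submodule.span ℝ (Set.range v), ?_, ?_, ?_⟩
  · rw [finrank_span_eq_card hv, Fintype.card_coe]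
  · rw [Submodule.map_span, ← Set.range_comp]
    have hw : ⇑(resB B) ∘ v = fun s : S =>
        Pi.single (M := fun _ : {x // x ∈ B} => ℝ) ⟨(s : V), hSB s.2⟩ 1 := by
      funext s b
      rw [Function.comp_apply, resB_apply, hv_def]
      by_cases hbs : (b : V) = (s : V)
      · have hb : b = (⟨(s : V), hSB s.2⟩ : {x // x ∈ B}) := Subtype.ext hbs
        simp [Pi.single_apply, hbs, hb]
      · have hne : b ≠ (⟨(s : V), hSB s.2⟩ : {x // x ∈ B}) :=
          fun hcon => hbs (congrArg Subtype.val hcon)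
        simp [Pi.single_apply, hbs, hne]
    rw [hw]
    have hinj : Function.Injective
        (fun s : S => (⟨(s : V), hSB s.2⟩ : {x // x ∈ B})) :=
      fun a b hab => Subtype.ext
        (show (a : V) = (b : V) from congrArg (Subtype.val : {x // x ∈ B} → V) hab)
    have hw' : LinearIndependent ℝ (fun s : S =>
        Pi.single (M := fun _ : {x // x ∈ B} => ℝ) ⟨(s : V), hSB s.2⟩ 1) := by
      have h := (Pi.basisFun ℝ {x // x ∈ B}).linearIndependent.comp _ hinj
      have heq : ((Pi.basisFun ℝ {x // x ∈ B}) ∘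
            fun s : S => (⟨(s : V), hSB s.2⟩ : {x // x ∈ B}))
          = fun s : S => Pi.single (M := fun _ : {x // x ∈ B} => ℝ) ⟨(s : V), hSB s.2⟩ 1 := by
        funext s
        rw [Function.comp_apply, Pi.basisFun_apply]
      rwa [heq] at h
    rw [finrank_span_eq_card hw', Fintype.card_coe]
  · intro f hf x hx
    let Z : Submodule ℝ (V → ℝ) :=
      { carrier := {g : V → ℝ | ∀ y, y ∉ S → g y = 0}
        add_mem' := fun ha hb y hy => by simp [ha y hy, hb y hy]
        zero_mem' := fun y _ => rfl
        smul_mem' := fun c g hg y hy => by simp [hg y hy] }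
    have hle : Submodule.span ℝ (Set.range v) ≤ Z := by
      rw [Submodule.span_le]
      rintro _ ⟨s, rfl⟩ y hy
      exact Pi.single_eq_of_ne (fun hys => hy (by rw [hys]; exact s.2)) 1
    exact hle hf x hx

lemma TSet_nonneg (G : SimpleGraph V) [DecidableRel G.Adj] (B : Finset V) {k : ℕ}
    (hk : 1 ≤ k) : ∀ t ∈ TSet G B k, 0 ≤ t := by
  rintro t ⟨F, hrank, hF⟩
  obtain ⟨g, hgF, hg0⟩ := exists_ne_zero_of_finrank _ hk hrank
  obtain ⟨f, hfF, rfl⟩ := hgF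
  obtain ⟨b, hbne⟩ := Function.ne_iff.mp hg0
  have hb : f (b : V) ≠ 0 := hbne
  have hpos : 0 < ∑ x ∈ B, f x ^ 2 :=
    Finset.sum_pos' (fun i _ => sq_nonneg (f i))
      ⟨(b : V), b.2, (sq_nonneg (f (b : V))).lt_of_ne (Ne.symm (pow_ne_zero 2 hb))⟩
  have h1 := hF f hfF
  nlinarith [dE_nonneg G f]

lemma quad_dd_nonneg (G : SimpleGraph V) [DecidableRel G.Adj] (B : Finset V)
    {r : ℝ} (hr : 0 < r) (f : V → ℝ) :
    0 ≤ quadForm (Matrix.diagonal (dd B r) * G.lapMatrix ℝ * Matrix.diagonal (dd B r)) f := by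
  rw [quad_diag, quad_lap]
  exact dE_nonneg G _

lemma SSet_nonneg (G : SimpleGraph V) [DecidableRel G.Adj] (B : Finset V) {k : ℕ}
    (hk : 1 ≤ k) {r : ℝ} (hr : 0 < r) :
    ∀ t ∈ SSet (Matrix.diagonal (dd B r) * G.lapMatrix ℝ * Matrix.diagonal (dd B r)) k,
      0 ≤ t := by
  rintro t ⟨F, hrank, hF⟩
  obtain ⟨f, hfF, hf0⟩ := exists_ne_zero_of_finrank _ hk hrank
  have h1 := hF f hfF
  have h2 := quad_dd_nonneg G B hr f
  have h3 := sum_sq_pos hf0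
  nlinarith

lemma SSet_nonempty (G : SimpleGraph V) [DecidableRel G.Adj] (B : Finset V) {k : ℕ}
    (hk : k ≤ Fintype.card V) {r : ℝ} (hr : 0 < r) :
    (2 * (Fintype.card V : ℝ) * max 1 (r ^ 2)) ∈
      SSet (Matrix.diagonal (dd B r) * G.lapMatrix ℝ * Matrix.diagonal (dd B r)) k := by
  obtain ⟨S, hSu, hScard⟩ := Finset.exists_subset_card_eq
    (show k ≤ (Finset.univ : Finset V).card by simpa using hk)
  obtain ⟨F, hrkF, _, _⟩ := singles_subspace S S (Finset.Subset.refl S)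
  refine ⟨F, by rw [hrkF, hScard], ?_⟩
  intro f hf
  rw [quad_diag, quad_lap]
  have h1 := dE_le G (fun x => dd B r x * f x)
  have h2 : ∑ x : V, (dd B r x * f x) ^ 2 ≤ max 1 (r ^ 2) * ∑ x : V, f x ^ 2 := by
    rw [Finset.mul_sum]
    refine Finset.sum_le_sum fun x _ => ?_
    rw [mul_pow]
    have : dd B r x ^ 2 ≤ max 1 (r ^ 2) := by
      unfold dd; split
      · simpa using le_max_left (1 : ℝ) (r ^ 2)
      · exact le_max_right _ _
    nlinarith [sq_nonneg (f x)]
  have hn0 : (0 : ℝ) ≤ 2 * (Fintype.card V : ℝ) := by positivity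
  calc dirichletEnergy G (fun x => dd B r x * f x)
      ≤ 2 * (Fintype.card V : ℝ) * ∑ x : V, (dd B r x * f x) ^ 2 := h1
    _ ≤ 2 * (Fintype.card V : ℝ) * (max 1 (r ^ 2) * ∑ x : V, f x ^ 2) :=
        mul_le_mul_of_nonneg_left h2 hn0
    _ = 2 * (Fintype.card V : ℝ) * max 1 (r ^ 2) * ∑ x : V, f x ^ 2 := by ring

lemma TSet_nonempty (G : SimpleGraph V) [DecidableRel G.Adj] (B : Finset V) {k : ℕ}
    (hk : k ≤ B.card) :
    (2 * (Fintype.card V : ℝ)) ∈ TSet G B k := by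
  obtain ⟨S, hSB, hScard⟩ := Finset.exists_subset_card_eq hk
  obtain ⟨F, _, hrkmap, hvan⟩ := singles_subspace B S hSB
  refine ⟨F, by rw [hrkmap, hScard], ?_⟩
  intro f hf
  have hzero : ∀ x ∈ Bᶜ, f x ^ 2 = 0 := by
    intro x hx
    rw [Finset.mem_compl] at hx
    rw [hvan f hf x (fun hxS => hx (hSB hxS))]
    simp
  have hsum : ∑ x : V, f x ^ 2 = ∑ x ∈ B, f x ^ 2 := by
    rw [← Finset.sum_add_sum_compl B (fun x => f x ^ 2), Finset.sum_eq_zero hzero, add_zero]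
  have := dE_le G f
  rw [hsum] at this
  linarith

lemma T_subset_S (G : SimpleGraph V) [DecidableRel G.Adj] (B : Finset V) {k : ℕ}
    (hk : 1 ≤ k) {r : ℝ} (hr : 0 < r) :
    ∀ s ∈ TSet G B k,
      s ∈ SSet (Matrix.diagonal (dd B r) * G.lapMatrix ℝ * Matrix.diagonal (dd B r)) k := by
  intro s hs
  have hs0 : 0 ≤ s := TSet_nonneg G B hk s hs
  obtain ⟨F, hrank, hF⟩ := hs
  obtain ⟨F', hle, hrk'⟩ := exists_le_finrank F (resB B)
  set e : (V → ℝ) ≃ₗ[ℝ] (V → ℝ) := mulEquiv (dd B r) (dd_ne B hr) with he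
  refine ⟨F'.map (e.symm : (V → ℝ) →ₗ[ℝ] (V → ℝ)), ?_, ?_⟩
  · rw [LinearEquiv.finrank_map_eq, hrk', hrank]
  · intro f hf
    obtain ⟨g, hgF', rfl⟩ := Submodule.mem_map.mp hf
    have hge : (fun x => dd B r x * (e.symm : (V → ℝ) →ₗ[ℝ] (V → ℝ)) g x) = g := by
      funext x
      have h1 := congrFun (e.apply_symm_apply g) x
      rw [he] at h1
      rw [← h1]
      rfl
    rw [quad_diag, hge, quad_lap]
    have hBeq : ∑ x ∈ B, g x ^ 2
        = ∑ x ∈ B, ((e.symm : (V → ℝ) →ₗ[ℝ] (V → ℝ)) g x) ^ 2 := by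
      refine Finset.sum_congr rfl fun x hx => ?_
      have h1 := congrFun hge x
      have h2 : dd B r x = 1 := by unfold dd; rw [if_pos hx]
      rw [h2, one_mul] at h1
      rw [h1]
    have hsub : ∑ x ∈ B, ((e.symm : (V → ℝ) →ₗ[ℝ] (V → ℝ)) g x) ^ 2
        ≤ ∑ x : V, ((e.symm : (V → ℝ) →ₗ[ℝ] (V → ℝ)) g x) ^ 2 :=
      Finset.sum_le_sum_of_subset_of_nonneg (Finset.subset_univ B)
        (fun i _ _ => sq_nonneg _)
    calc dirichletEnergy G g ≤ s * ∑ x ∈ B, g x ^ 2 := hF g (hle hgF')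
      _ = s * ∑ x ∈ B, ((e.symm : (V → ℝ) →ₗ[ℝ] (V → ℝ)) g x) ^ 2 := by rw [hBeq]
      _ ≤ s * ∑ x : V, ((e.symm : (V → ℝ) →ₗ[ℝ] (V → ℝ)) g x) ^ 2 :=
          mul_le_mul_of_nonneg_left hsub hs0

lemma lower_core (G : SimpleGraph V) [DecidableRel G.Adj] (hc : G.Connected)
    (B : Finset V) (hB : B.Nonempty) {k : ℕ} (hk : 1 ≤ k) {r t : ℝ} (hr : 0 < r)
    (ht : t ∈ SSet (Matrix.diagonal (dd B r) * G.lapMatrix ℝ * Matrix.diagonal (dd B r)) k)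
    (hsmall : t * pC (Fintype.card V) < r ^ 2) :
    t * (r ^ 2 + pC (Fintype.card V)) / (r ^ 2 - t * pC (Fintype.card V))
      ∈ TSet G B k := by
  have ht0 : 0 ≤ t := SSet_nonneg G B hk hr t ht
  obtain ⟨F, hrkF, hF⟩ := ht
  set C := pC (Fintype.card V) with hCdef
  have hpos : 0 < r ^ 2 - t * C := by linarith
  set e : (V → ℝ) ≃ₗ[ℝ] (V → ℝ) := mulEquiv (dd B r) (dd_ne B hr) with he
  have hef : ∀ f : V → ℝ, (fun x => dd B r x * f x) = (e : (V → ℝ) →ₗ[ℝ] (V → ℝ)) f := by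
    intro f; funext x; rfl
  have key : ∀ g ∈ F.map (e : (V → ℝ) →ₗ[ℝ] (V → ℝ)),
      (r ^ 2 - t * C) * dirichletEnergy G g ≤ t * (r ^ 2 + C) * ∑ x ∈ B, g x ^ 2 := by
    intro g hg
    obtain ⟨f, hfF, rfl⟩ := Submodule.mem_map.mp hg
    set g : V → ℝ := (e : (V → ℝ) →ₗ[ℝ] (V → ℝ)) f with hgdef
    have hgx : ∀ x, g x = dd B r x * f x := by
      intro x; rw [hgdef, ← hef f]
    have hEq : dirichletEnergy G g = quadForm
        (Matrix.diagonal (dd B r) * G.lapMatrix ℝ * Matrix.diagonal (dd B r)) f := by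
      rw [quad_diag, quad_lap, hef f, ← hgdef]
    have h1 : dirichletEnergy G g ≤ t * ∑ x : V, f x ^ 2 := by
      rw [hEq]; exact hF f hfF
    have hBeq : ∑ x ∈ B, f x ^ 2 = ∑ x ∈ B, g x ^ 2 := by
      refine Finset.sum_congr rfl fun x hx => ?_
      have h2 : dd B r x = 1 := by unfold dd; rw [if_pos hx]
      rw [hgx x, h2, one_mul]
    have hCeq : ∑ x ∈ Bᶜ, g x ^ 2 = r ^ 2 * ∑ x ∈ Bᶜ, f x ^ 2 := by
      rw [Finset.mul_sum]
      refine Finset.sum_congr rfl fun x hx => ?_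
      have hxB : x ∉ B := Finset.mem_compl.mp hx
      have h2 : dd B r x = r := by unfold dd; rw [if_neg hxB]
      rw [hgx x, h2]; ring
    have hSf : r ^ 2 * (∑ x : V, f x ^ 2)
        = r ^ 2 * (∑ x ∈ B, g x ^ 2) + ∑ x ∈ Bᶜ, g x ^ 2 := by
      rw [← Finset.sum_add_sum_compl B (fun x => f x ^ 2), mul_add, hBeq, hCeq]
    have hcompl : ∑ x ∈ Bᶜ, g x ^ 2 ≤ ∑ x : V, g x ^ 2 :=
      Finset.sum_le_sum_of_subset_of_nonneg (Finset.subset_univ _)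
        (fun i _ _ => sq_nonneg _)
    have hpoin : ∑ x : V, g x ^ 2 ≤ C * ((∑ x ∈ B, g x ^ 2) + dirichletEnergy G g) :=
      poincare G hc B hB g
    have m1 : r ^ 2 * dirichletEnergy G g
        ≤ t * (r ^ 2 * (∑ x ∈ B, g x ^ 2) + ∑ x ∈ Bᶜ, g x ^ 2) := by
      calc r ^ 2 * dirichletEnergy G g ≤ r ^ 2 * (t * ∑ x : V, f x ^ 2) :=
            mul_le_mul_of_nonneg_left h1 (sq_nonneg r)
        _ = t * (r ^ 2 * ∑ x : V, f x ^ 2) := by ring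
        _ = t * (r ^ 2 * (∑ x ∈ B, g x ^ 2) + ∑ x ∈ Bᶜ, g x ^ 2) := by rw [hSf]
    have m3 : t * ∑ x ∈ Bᶜ, g x ^ 2 ≤ t * ∑ x : V, g x ^ 2 :=
      mul_le_mul_of_nonneg_left hcompl ht0
    have m2 : t * ∑ x : V, g x ^ 2
        ≤ t * (C * ((∑ x ∈ B, g x ^ 2) + dirichletEnergy G g)) :=
      mul_le_mul_of_nonneg_left hpoin ht0
    nlinarith [m1, m2, m3]
  refine ⟨F.map (e : (V → ℝ) →ₗ[ℝ] (V → ℝ)), ?_, ?_⟩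
  · have hinj : ∀ g ∈ F.map (e : (V → ℝ) →ₗ[ℝ] (V → ℝ)), resB B g = 0 → g = 0 := by
      intro g hg hres
      have hSB0 : ∑ x ∈ B, g x ^ 2 = 0 := Finset.sum_eq_zero fun x hx => by
        have hx0 : g x = 0 := congrFun hres ⟨x, hx⟩
        rw [hx0]; ring
      have hkey := key g hg
      rw [hSB0, mul_zero] at hkey
      have hE0 : dirichletEnergy G g ≤ 0 := by nlinarith [dE_nonneg G g]
      have hpoin := poincare G hc B hB g
      rw [hSB0] at hpoin
      have hsum0 : ∑ x : V, g x ^ 2 ≤ 0 := by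
        have hb0 := hB
        obtain ⟨b0, _⟩ := hb0
        have hC0 : 0 < C := pC_pos (Fintype.card_pos_iff.mpr ⟨b0⟩)
        nlinarith [dE_nonneg G g]
      exact sum_sq_eq_zero hsum0
    rw [finrank_map_of_inj _ (resB B) hinj, LinearEquiv.finrank_map_eq, hrkF]
  · intro g hg
    have hkey := key g hg
    rw [div_mul_eq_mul_div, le_div_iff₀ hpos]
    nlinarith [hkey]

lemma S_lower_two (G : SimpleGraph V) [DecidableRel G.Adj] (hc : G.Connected)
    (B : Finset V) (hB : B.Nonempty) {k : ℕ} (hkB : B.card < k) {r t : ℝ} (hr : 0 < r)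
    (ht : t ∈ SSet (Matrix.diagonal (dd B r) * G.lapMatrix ℝ * Matrix.diagonal (dd B r)) k) :
    r ^ 2 / pC (Fintype.card V) ≤ t := by
  obtain ⟨F, hrkF, hF⟩ := ht
  set C := pC (Fintype.card V) with hCdef
  have hC0 : 0 < C := pC_pos (Fintype.card_pos_iff.mpr ⟨hB.choose⟩)
  have hexists : ∃ f ∈ F, f ≠ 0 ∧ ∀ x ∈ B, f x = 0 := by
    by_contra h
    push_neg at h
    have hinj : ∀ g ∈ F, resB B g = 0 → g = 0 := by
      intro g hg hres
      by_contra hg0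
      have hvan : ∀ x ∈ B, g x = 0 := fun x hx => congrFun hres ⟨x, hx⟩
      obtain ⟨x, hx, hgx⟩ := h g hg hg0
      exact hgx (hvan x hx)
    have hle : Module.finrank ℝ (F.map (resB B))
        ≤ Module.finrank ℝ ({v // v ∈ B} → ℝ) := Submodule.finrank_le _
    rw [finrank_map_of_inj F (resB B) hinj, hrkF] at hle
    rw [Module.finrank_fintype_fun_eq_card, Fintype.card_coe] at hle
    omega
  obtain ⟨f, hfF, hf0, hfB⟩ := hexists
  set g : V → ℝ := fun x => dd B r x * f x with hg
  have hSB0 : ∑ x ∈ B, g x ^ 2 = 0 := Finset.sum_eq_zero fun x hx => by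
    have : g x = dd B r x * f x := rfl
    rw [this, hfB x hx]; ring
  have hq : quadForm (Matrix.diagonal (dd B r) * G.lapMatrix ℝ * Matrix.diagonal (dd B r)) f
      = dirichletEnergy G g := by
    rw [quad_diag, quad_lap]
  have h1 : dirichletEnergy G g ≤ t * ∑ x : V, f x ^ 2 := by
    rw [← hq]; exact hF f hfF
  have hpoin := poincare G hc B hB g
  rw [hSB0, zero_add] at hpoin
  have hSf : r ^ 2 * ∑ x : V, f x ^ 2 = ∑ x : V, g x ^ 2 := by
    rw [Finset.mul_sum]
    refine Finset.sum_congr rfl fun x _ => ?_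
    by_cases hx : x ∈ B
    · have : g x = dd B r x * f x := rfl
      rw [this, hfB x hx]; ring
    · have h2 : dd B r x = r := by unfold dd; rw [if_neg hx]
      have : g x = dd B r x * f x := rfl
      rw [this, h2]; ring
  have hSfpos : 0 < ∑ x : V, f x ^ 2 := sum_sq_pos hf0
  have hchain : r ^ 2 * ∑ x : V, f x ^ 2 ≤ C * t * ∑ x : V, f x ^ 2 := by
    calc r ^ 2 * ∑ x : V, f x ^ 2 = ∑ x : V, g x ^ 2 := hSf
      _ ≤ C * dirichletEnergy G g := hpoin
      _ ≤ C * (t * ∑ x : V, f x ^ 2) := mul_le_mul_of_nonneg_left h1 hC0.le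
      _ = C * t * ∑ x : V, f x ^ 2 := by ring
  have hrc : r ^ 2 ≤ C * t := le_of_mul_le_mul_right
    (by rw [mul_comm (r ^ 2), mul_comm (C * t)] at hchain ⊢; exact hchain) hSfpos
  rw [div_le_iff₀ hC0]
  linarith

end Stmt18Aux


/-- Let `G = (V,E)` be a finite connected simple graph with nonempty
boundary `B ⊊ V`, let `L` be the Laplacian matrix of `G`, and for each real `r > 0` let
`L^{(r)} = D^{(r)} L D^{(r)}`, with eigenvalues `μ₁^{(r)} ≤ ⋯ ≤ μ_{|V|}^{(r)}` listed in
increasing order with multiplicity. Then for `1 ≤ k ≤ |B|` one has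
`lim_{r→+∞} μₖ^{(r)} = σₖ(G,B)`, and for `|B| < k ≤ |V|` one has
`lim_{r→+∞} μₖ^{(r)} = +∞`. -/
theorem stmt18 {V : Type*} [Fintype V] [DecidableEq V] (G : SimpleGraph V)
    [DecidableRel G.Adj] (hconn : G.Connected) (B : Finset V) (hB : B.Nonempty)
    (hBV : B ≠ Finset.univ) :
    (∀ k : ℕ, 1 ≤ k → k ≤ B.card →
      Filter.Tendsto
        (fun r : ℝ =>
          sortedEigenvalue (diagMatrixD B r * G.lapMatrix ℝ * diagMatrixD B r) k)
        Filter.atTop (nhds (steklovEig G B k))) ∧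
    (∀ k : ℕ, B.card < k → k ≤ Fintype.card V →
      Filter.Tendsto
        (fun r : ℝ =>
          sortedEigenvalue (diagMatrixD B r * G.lapMatrix ℝ * diagMatrixD B r) k)
        Filter.atTop Filter.atTop) := by
  classical
  have hMeq : ∀ r : ℝ, diagMatrixD B r = Matrix.diagonal (Stmt18Aux.dd B r) := fun r => rfl
  have hn0 : 0 < Fintype.card V := Fintype.card_pos_iff.mpr ⟨hB.choose⟩
  set n : ℕ := Fintype.card V with hn
  set C : ℝ := Stmt18Aux.pC n with hCdef
  have hC0 : 0 < C := Stmt18Aux.pC_pos hn0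
  constructor
  · -- Part 1 : 1 ≤ k ≤ |B|
    intro k hk1 hkB
    have hkV : k ≤ Fintype.card V := le_trans hkB (Finset.card_le_univ B)
    set σ : ℝ := steklovEig G B k with hσ
    have hTne : (Stmt18Aux.TSet G B k).Nonempty := ⟨_, Stmt18Aux.TSet_nonempty G B hkB⟩
    have hT0 : ∀ t ∈ Stmt18Aux.TSet G B k, 0 ≤ t := Stmt18Aux.TSet_nonneg G B hk1
    have hTbdd : BddBelow (Stmt18Aux.TSet G B k) := ⟨0, hT0⟩
    have hσ2n : σ ≤ 2 * (n : ℝ) := by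
      rw [hσ, Stmt18Aux.steklovEig_eq]
      exact csInf_le hTbdd (Stmt18Aux.TSet_nonempty G B hkB)
    have hσ0 : 0 ≤ σ := by
      rw [hσ, Stmt18Aux.steklovEig_eq]
      exact le_csInf hTne hT0
    -- upper bound
    have hub : ∀ r : ℝ, 0 < r →
        sortedEigenvalue (diagMatrixD B r * G.lapMatrix ℝ * diagMatrixD B r) k ≤ σ := by
      intro r hr
      rw [hMeq, Stmt18Aux.sortedEigenvalue_eq, hσ, Stmt18Aux.steklovEig_eq]
      exact le_csInf hTne fun s hs =>
        csInf_le ⟨0, Stmt18Aux.SSet_nonneg G B hk1 hr⟩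
          (Stmt18Aux.T_subset_S G B hk1 hr s hs)
    -- lower bound
    have hlb : ∀ r : ℝ, max 1 (Real.sqrt (2 * (n : ℝ) * C)) ≤ r →
        σ * r ^ 2 / (r ^ 2 + C * (1 + σ))
          ≤ sortedEigenvalue (diagMatrixD B r * G.lapMatrix ℝ * diagMatrixD B r) k := by
      intro r hrge
      have hr1 : (1 : ℝ) ≤ r := le_trans (le_max_left _ _) hrge
      have hr : 0 < r := lt_of_lt_of_le one_pos hr1
      have hr2 : 2 * (n : ℝ) * C ≤ r ^ 2 := by
        have h := le_trans (le_max_right _ _) hrge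
        have h2 := pow_le_pow_left₀ (Real.sqrt_nonneg _) h 2
        rwa [Real.sq_sqrt (mul_nonneg (by positivity) hC0.le)] at h2
      have hr2pos : 0 < r ^ 2 := by positivity
      have hD2 : 0 < r ^ 2 + C * (1 + σ) := by nlinarith
      rw [hMeq, Stmt18Aux.sortedEigenvalue_eq]
      refine le_csInf ⟨_, Stmt18Aux.SSet_nonempty G B hkV hr⟩ fun t ht => ?_
      have ht0 : 0 ≤ t := Stmt18Aux.SSet_nonneg G B hk1 hr t ht
      by_cases hcase : t * C < r ^ 2
      · have hmem := Stmt18Aux.lower_core G hconn B hB hk1 hr ht hcase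
        have hσle : σ ≤ t * (r ^ 2 + C) / (r ^ 2 - t * C) := by
          rw [hσ, Stmt18Aux.steklovEig_eq]
          exact csInf_le hTbdd hmem
        have hpos : 0 < r ^ 2 - t * C := by linarith
        rw [le_div_iff₀ hpos] at hσle
        rw [div_le_iff₀ hD2]
        nlinarith [hσle]
      · push_neg at hcase
        have hLBσ : σ * r ^ 2 / (r ^ 2 + C * (1 + σ)) ≤ σ := by
          rw [div_le_iff₀ hD2]
          nlinarith [mul_nonneg (mul_nonneg hσ0 hC0.le) (by linarith : (0:ℝ) ≤ 1 + σ)]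
        have hσt : σ ≤ t := by nlinarith
        linarith
    -- limit of the lower bound
    have hlim : Filter.Tendsto (fun r : ℝ => σ * r ^ 2 / (r ^ 2 + C * (1 + σ)))
        Filter.atTop (nhds σ) := by
      have h1 : Filter.Tendsto (fun r : ℝ => C * (1 + σ) / r ^ 2)
          Filter.atTop (nhds 0) :=
        Filter.Tendsto.div_atTop tendsto_const_nhds
          (Filter.tendsto_pow_atTop (by norm_num : (2 : ℕ) ≠ 0))
      have h2 : Filter.Tendsto (fun r : ℝ => σ / (1 + C * (1 + σ) / r ^ 2))
          Filter.atTop (nhds σ) := by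
        have h3 := Filter.Tendsto.div (tendsto_const_nhds (x := σ))
          (Filter.Tendsto.add (tendsto_const_nhds (x := (1 : ℝ))) h1) (by norm_num)
        rw [add_zero, div_one] at h3; exact h3
      refine h2.congr' ?_
      filter_upwards [Filter.eventually_gt_atTop (0 : ℝ)] with r hr
      have hr2 : (0 : ℝ) < r ^ 2 := by positivity
      field_simp
    refine tendsto_of_tendsto_of_tendsto_of_le_of_le' hlim tendsto_const_nhds ?_ ?_
    · filter_upwards [Filter.eventually_ge_atTop (max 1 (Real.sqrt (2 * (n : ℝ) * C)))]
        with r hr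
      exact hlb r hr
    · filter_upwards [Filter.eventually_gt_atTop (0 : ℝ)] with r hr
      exact hub r hr
  · -- Part 2 : |B| < k ≤ |V|
    intro k hkB hkV
    have hlow : Filter.Tendsto (fun r : ℝ => r ^ 2 / C) Filter.atTop Filter.atTop :=
      Filter.Tendsto.atTop_div_const hC0
        (Filter.tendsto_pow_atTop (by norm_num : (2 : ℕ) ≠ 0))
    refine Filter.tendsto_atTop_mono' Filter.atTop ?_ hlow
    filter_upwards [Filter.eventually_gt_atTop (0 : ℝ)] with r hr
    rw [hMeq, Stmt18Aux.sortedEigenvalue_eq]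
    exact le_csInf ⟨_, Stmt18Aux.SSet_nonempty G B hkV hr⟩
      (fun t ht => Stmt18Aux.S_lower_two G hconn B hB hkB hr ht)
end
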